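/- arXiv:1607.08455 — 8 statements merged into one kernel-verified Lean document; each statement's English description precedes it below -/
import Mathlib

section
/- Let k and i be positive integers with gcd(i,k) = 1, and let F = GaloisField 2 k. For any c1, c2, c3 ∈ F, not all zero, the number of x ∈ F satisfying c1·x^(2^(2i)) + c2·x^(2^i) + c3·x = 0 is at most 4. -/
lemma aux_frob_fix (k i : ℕ) (hkpos : 0 < k) (hipos : 0 < i) (hgcd : Nat.gcd i k = 1)
    (u : GaloisField 2 k) (hu : u ^ 2 ^ i = u) : u = 0 ∨ u = 1 := by
  have hiter : ∀ m : ℕ, u ^ 2 ^ (i * m) = u := by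
    intro m
    induction m with
    | zero => simp
    | succ m ih =>
      have : i * (m + 1) = i * m + i := by ring
      rw [this, pow_add, pow_mul, ih, hu]
  haveI : Fintype (GaloisField 2 k) := Fintype.ofFinite _
  have hcard : Fintype.card (GaloisField 2 k) = 2 ^ k := by
    rw [← Nat.card_eq_fintype_card]; exact GaloisField.card 2 k hkpos.ne'
  have hk1 : ∀ (v : GaloisField 2 k), v ^ 2 ^ k = v := by
    intro v
    have := FiniteField.pow_card v
    rwa [hcard] at this
  have hkiter : ∀ m : ℕ, u ^ 2 ^ (k * m) = u := by
    intro m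
    induction m with
    | zero => simp
    | succ m ih =>
      have : k * (m + 1) = k * m + k := by ring
      rw [this, pow_add, pow_mul, ih, hk1]
  have hab : ∃ a b : ℕ, i * a = k * b + 1 := by
    rcases Nat.lt_or_ge 1 k with hk | hk
    · obtain ⟨a, -, ha⟩ := Nat.exists_mul_mod_eq_one_of_coprime hgcd hk
      refine ⟨a, i * a / k, ?_⟩
      have := Nat.div_add_mod (i * a) k
      omega
    · have hk' : k = 1 := le_antisymm hk hkpos
      subst hk'
      refine ⟨1, i - 1, ?_⟩
      omega
  obtain ⟨a, b, hab⟩ := hab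
  have hu2 : u ^ 2 = u := by
    have h1 := hiter a
    rw [hab, pow_add, pow_mul, hkiter b] at h1
    simpa using h1
  have : u * (u - 1) = 0 := by linear_combination hu2
  rcases mul_eq_zero.mp this with h | h
  · exact Or.inl h
  · exact Or.inr (sub_eq_zero.mp h)


lemma aux_two_eq_zero (k : ℕ) : (2 : GaloisField 2 k) = 0 := by
  have := CharP.cast_eq_zero (GaloisField 2 k) 2
  simpa using this

lemma aux_frob_fix' (k i : ℕ) (hkpos : 0 < k) (hipos : 0 < i) (hgcd : Nat.gcd i k = 1)
    (u : GaloisField 2 k) (hu : u ^ 2 ^ i + u = 0) : u = 0 ∨ u = 1 := by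
  apply aux_frob_fix k i hkpos hipos hgcd
  linear_combination hu - u * aux_two_eq_zero k

lemma aux_deg_one (k i : ℕ) (hkpos : 0 < k) (hipos : 0 < i) (hgcd : Nat.gcd i k = 1)
    (A C : GaloisField 2 k) (hA : A ≠ 0) (s₁ s₂ : GaloisField 2 k)
    (h1 : A * s₁ ^ 2 ^ i + C * s₁ = 0) (h2 : A * s₂ ^ 2 ^ i + C * s₂ = 0)
    (hs2 : s₂ ≠ 0) : s₁ = 0 ∨ s₁ = s₂ := by
  have hu : (s₁ / s₂) ^ 2 ^ i = s₁ / s₂ := by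
    rw [div_pow, div_eq_div_iff (pow_ne_zero _ hs2) hs2]
    apply mul_left_cancel₀ hA
    linear_combination s₂ * h1 - s₁ * h2
  rcases aux_frob_fix k i hkpos hipos hgcd _ hu with h | h
  · left; exact (div_eq_zero_iff.mp h).resolve_right hs2
  · right; exact (div_eq_one_iff_eq hs2).mp h



lemma aux_ncard_quad {α : Type*} (S : Set α) (a b c d : α) (h : S ⊆ {a, b, c, d}) :
    S.ncard ≤ 4 := by
  have h1 : S.ncard ≤ ({a, b, c, d} : Set α).ncard :=
    Set.ncard_le_ncard h (Set.Finite.insert _ (Set.Finite.insert _ (Set.Finite.insert _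
      (Set.finite_singleton _))))
  have h2 := Set.ncard_insert_le a ({b, c, d} : Set α)
  have h3 := Set.ncard_insert_le b ({c, d} : Set α)
  have h4 := Set.ncard_insert_le c ({d} : Set α)
  have h5 : ({d} : Set α).ncard = 1 := Set.ncard_singleton d
  omega

/-- Corollary 2.3: for `gcd(i,k) = 1` and `c1, c2, c3 ∈ GaloisField 2 k` not all zero,
the equation `c1·x^(2^(2i)) + c2·x^(2^i) + c3·x = 0` has at most 4 solutions. -/
theorem linearized_trinomial_at_most_four_solutions (k i : ℕ) (hkpos : 0 < k)
    (hipos : 0 < i) (hgcd : Nat.gcd i k = 1)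
    (c1 c2 c3 : GaloisField 2 k) (hc : ¬(c1 = 0 ∧ c2 = 0 ∧ c3 = 0)) :
    Set.ncard {x : GaloisField 2 k |
      c1 * x ^ 2 ^ (2 * i) + c2 * x ^ 2 ^ i + c3 * x = 0} ≤ 4 := by
  set K : Set (GaloisField 2 k) := {x : GaloisField 2 k | c1 * x ^ 2 ^ (2 * i) + c2 * x ^ 2 ^ i + c3 * x = 0} with hK
  have h2z : (2 : GaloisField 2 k) = 0 := aux_two_eq_zero k
  have hmem : ∀ x : GaloisField 2 k, x ∈ K ↔ c1 * x ^ 2 ^ (2 * i) + c2 * x ^ 2 ^ i + c3 * x = 0 := by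
    intro x; rfl
  suffices h : ∃ a b c d : GaloisField 2 k, K ⊆ {a, b, c, d} by
    obtain ⟨a, b, c, d, hsub⟩ := h
    exact aux_ncard_quad K a b c d hsub
  by_cases hc1 : c1 = 0
  · by_cases hc2 : c2 = 0
    · have hc3 : c3 ≠ 0 := by tauto
      refine ⟨0, 0, 0, 0, fun x hx => ?_⟩
      have hx' := (hmem x).mp hx
      rw [hc1, hc2] at hx'
      have : x = 0 := by
        have : c3 * x = 0 := by linear_combination hx'
        exact (mul_eq_zero.mp this).resolve_left hc3
      simp [this]
    · by_cases hex : ∃ y ∈ K, y ≠ 0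
      · obtain ⟨y, hyK, hy0⟩ := hex
        refine ⟨0, y, y, y, fun x hx => ?_⟩
        have hx' : c2 * x ^ 2 ^ i + c3 * x = 0 := by
          have := (hmem x).mp hx; rw [hc1] at this; linear_combination this
        have hy' : c2 * y ^ 2 ^ i + c3 * y = 0 := by
          have := (hmem y).mp hyK; rw [hc1] at this; linear_combination this
        rcases aux_deg_one k i hkpos hipos hgcd c2 c3 hc2 x y hx' hy' hy0 with h | h
        · simp [h]
        · simp [h]
      · push_neg at hex
        refine ⟨0, 0, 0, 0, fun x hx => ?_⟩
        simp [hex x hx]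
  · by_cases hex : ∃ y ∈ K, y ≠ 0
    · obtain ⟨x₀, hx₀K, hx₀⟩ := hex
      set A := c1 * x₀ ^ 2 ^ (2 * i) with hA
      set B := c2 * x₀ ^ 2 ^ i with hB
      set C := c3 * x₀ with hC
      have hAne : A ≠ 0 := mul_ne_zero hc1 (pow_ne_zero _ hx₀)
      have hE0 : A + B + C = 0 := by
        have := (hmem x₀).mp hx₀K
        linear_combination this
      have hpp : (2:ℕ) ^ (2 * i) = 2 ^ i * 2 ^ i := by rw [two_mul, pow_add]
      -- key: for x ∈ K, s := t^q + t with t = x/x₀ satisfies A s^q + C s = 0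
      have key : ∀ x ∈ K, A * ((x / x₀) ^ 2 ^ i + x / x₀) ^ 2 ^ i
          + C * ((x / x₀) ^ 2 ^ i + x / x₀) = 0 := by
        intro x hx
        set t := x / x₀ with ht
        have hxt : x = x₀ * t := by
          rw [ht, mul_div_cancel₀ _ hx₀]
        have hE1 : A * t ^ (2 ^ i * 2 ^ i) + B * t ^ 2 ^ i + C * t = 0 := by
          have hx' := (hmem x).mp hx
          rw [hxt] at hx'
          rw [hA, hB, hC, hpp]
          linear_combination hx'
        have hadd : (t ^ 2 ^ i + t) ^ 2 ^ i = (t ^ 2 ^ i) ^ 2 ^ i + t ^ 2 ^ i :=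
          add_pow_char_pow _ _ 2 i
        rw [hadd, ← pow_mul]
        linear_combination hE1 + (t ^ 2 ^ i) * hE0 - (B * t ^ 2 ^ i) * h2z
      by_cases hex2 : ∃ x₁ ∈ K, (x₁ / x₀) ^ 2 ^ i + x₁ / x₀ ≠ 0
      · obtain ⟨x₁, hx₁K, hs₁⟩ := hex2
        refine ⟨0, x₀, x₁, x₁ + x₀, fun x hx => ?_⟩
        have hsx := key x hx
        have hs1 := key x₁ hx₁K
        rcases aux_deg_one k i hkpos hipos hgcd A C hAne _ _ hsx hs1 hs₁ with h | h
        · -- (x/x₀)^q + x/x₀ = 0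
          rcases aux_frob_fix' k i hkpos hipos hgcd _ h with h0 | h1
          · have : x = 0 := by
              rcases div_eq_zero_iff.mp h0 with h' | h'
              · exact h'
              · exact absurd h' hx₀
            simp [this]
          · have : x = x₀ := by
              field_simp at h1; exact h1
            simp [this]
        · -- (x/x₀)^q + x/x₀ = (x₁/x₀)^q + x₁/x₀
          have hw : (x / x₀ + x₁ / x₀) ^ 2 ^ i + (x / x₀ + x₁ / x₀) = 0 := by
            have hadd : (x / x₀ + x₁ / x₀) ^ 2 ^ i
                = (x / x₀) ^ 2 ^ i + (x₁ / x₀) ^ 2 ^ i := add_pow_char_pow _ _ 2 i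
            rw [hadd]
            linear_combination h + (((x₁ / x₀) ^ 2 ^ i + x₁ / x₀)) * h2z
          rcases aux_frob_fix' k i hkpos hipos hgcd _ hw with h0 | h1
          · have : x = x₁ := by
              have : x / x₀ + x₁ / x₀ = 0 := h0
              field_simp at this
              linear_combination this - x₁ * h2z
            simp [this]
          · have : x = x₁ + x₀ := by
              have h1' : x / x₀ + x₁ / x₀ = 1 := h1
              field_simp at h1'
              linear_combination h1' - x₁ * h2z
            simp [this]
      · push_neg at hex2
        refine ⟨0, x₀, x₀, x₀, fun x hx => ?_⟩
        have h0 := hex2 x hx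
        rcases aux_frob_fix' k i hkpos hipos hgcd _ h0 with h | h
        · have : x = 0 := by
            rcases div_eq_zero_iff.mp h with h' | h'
            · exact h'
            · exact absurd h' hx₀
          simp [this]
        · have : x = x₀ := by field_simp at h; exact h
          simp [this]
    · push_neg at hex
      refine ⟨0, 0, 0, 0, fun x hx => ?_⟩
      simp [hex x hx]
end

section
/- Let k be an odd positive integer and i a positive integer with gcd(i,k) = 1, and let F = GaloisField 2 k. For any c1, c2, c3 ∈ F, not all zero, the number of x ∈ F satisfying c1·x^(2^(4i)) + c2·x^(2^(2i)) + c3·x = 0 is at most 4. -/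
section Aux

lemma aux_bezout {a k : ℕ} (ha : 0 < a) (hk : 0 < k) (h : Nat.Coprime a k) :
    ∃ m n, a * m = k * n + 1 := by
  rcases Nat.lt_or_ge 1 k with hk2 | hk1
  · obtain ⟨m, -, hm⟩ := Nat.exists_mul_mod_eq_one_of_coprime h hk2
    refine ⟨m, a * m / k, ?_⟩
    conv_lhs => rw [← Nat.div_add_mod (a * m) k, hm]
  · interval_cases k
    exact ⟨1, a - 1, by omega⟩

lemma aux_pow_mul {F : Type*} [CommRing F] (x : F) (a : ℕ) (hx : x ^ 2 ^ a = x) :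
    ∀ m, x ^ 2 ^ (a * m) = x := by
  intro m
  induction m with
  | zero => simp
  | succ m ih =>
    have : 2 ^ (a * (m + 1)) = 2 ^ (a * m) * 2 ^ a := by rw [← pow_add]; ring_nf
    rw [this, pow_mul, ih, hx]

/-- Fixed points of `x ↦ x^(2^(2i))` in `GaloisField 2 k` with `gcd(2i,k)=1` satisfy `x^2 = x`. -/
lemma aux_fix (k i : ℕ) (hkpos : 0 < k) (hipos : 0 < i) (hgcd : Nat.Coprime (2 * i) k)
    (x : GaloisField 2 k) (hx : x ^ 2 ^ (2 * i) = x) : x ^ 2 = x := by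
  obtain ⟨m, n, hmn⟩ := aux_bezout (by omega) hkpos hgcd
  have hcard : x ^ 2 ^ k = x := by
    haveI : Fintype (GaloisField 2 k) := Fintype.ofFinite _
    have h1 := FiniteField.pow_card x
    have h2 : Fintype.card (GaloisField 2 k) = 2 ^ k := by
      rw [← Nat.card_eq_fintype_card, GaloisField.card 2 k hkpos.ne']
    rwa [h2] at h1
  have h1 : x ^ 2 ^ (2 * i * m) = x := aux_pow_mul x (2 * i) hx m
  have h2 : x ^ 2 ^ (k * n) = x := aux_pow_mul x k hcard n
  have : x ^ 2 ^ (k * n + 1) = x ^ 2 := by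
    rw [pow_succ, pow_mul, h2]
  rw [hmn, this] at h1
  exact h1

end Aux

/-- Corollary 2.4: for `k` odd, `gcd(i,k) = 1` and `c1, c2, c3 ∈ GaloisField 2 k` not all
zero, the equation `c1·x^(2^(4i)) + c2·x^(2^(2i)) + c3·x = 0` has at most 4 solutions. -/
theorem linearized_trinomial_double_step_at_most_four_solutions (k i : ℕ) (hk : Odd k)
    (hkpos : 0 < k) (hipos : 0 < i) (hgcd : Nat.gcd i k = 1)
    (c1 c2 c3 : GaloisField 2 k) (hc : ¬(c1 = 0 ∧ c2 = 0 ∧ c3 = 0)) :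
    Set.ncard {x : GaloisField 2 k |
      c1 * x ^ 2 ^ (4 * i) + c2 * x ^ 2 ^ (2 * i) + c3 * x = 0} ≤ 4 := by
  set q : ℕ := 2 ^ (2 * i) with hq
  have hchar : CharP (GaloisField 2 k) 2 := inferInstance
  have htwo : (2 : GaloisField 2 k) = 0 := by
    have := hchar.cast_eq_zero
    simpa using this
  have hgcd2 : Nat.Coprime (2 * i) k := by
    exact Nat.Coprime.mul hk.coprime_two_left hgcd
  -- fixed point lemma
  have hfix : ∀ x : GaloisField 2 k, x ^ q = x → x = 0 ∨ x = 1 := by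
    intro x hx
    have h2 : x ^ 2 = x := aux_fix k i hkpos hipos hgcd2 x hx
    have : x * (x - 1) = 0 := by ring_nf; linear_combination h2
    rcases mul_eq_zero.mp this with h | h
    · exact Or.inl h
    · exact Or.inr (sub_eq_zero.mp h)
  -- rewrite the big power
  have hpow4 : ∀ x : GaloisField 2 k, x ^ 2 ^ (4 * i) = (x ^ q) ^ q := by
    intro x
    rw [hq, ← pow_mul, ← pow_add]
    congr 1
    ring
  -- q-power is additive
  have hadd : ∀ x y : GaloisField 2 k, (x + y) ^ q = x ^ q + y ^ q := fun x y =>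
    add_pow_char_pow x y 2 (2 * i)
  -- degree-1 kernel lemma
  have hdeg1 : ∀ a b x y : GaloisField 2 k, ¬(a = 0 ∧ b = 0) →
      a * x ^ q + b * x = 0 → a * y ^ q + b * y = 0 → x ≠ 0 → y = 0 ∨ y = x := by
    intro a b x y hab hx hy hx0
    by_cases ha : a = 0
    · subst ha
      have hb : b ≠ 0 := fun h => hab ⟨rfl, h⟩
      simp only [zero_mul, zero_add, mul_eq_zero] at hx
      tauto
    · by_cases hy0 : y = 0
      · exact Or.inl hy0
      right
      have hxq : x ^ q ≠ 0 := pow_ne_zero _ hx0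
      have cross : a * (y ^ q * x) = a * (x ^ q * y) := by
        have hx' : a * x ^ q = b * x := by linear_combination hx - b * x * htwo
        have hy' : a * y ^ q = b * y := by linear_combination hy - b * y * htwo
        calc a * (y ^ q * x) = (a * y ^ q) * x := by ring
          _ = (b * y) * x := by rw [hy']
          _ = (b * x) * y := by ring
          _ = (a * x ^ q) * y := by rw [hx']
          _ = a * (x ^ q * y) := by ring
      have cross' : y ^ q * x = x ^ q * y := mul_left_cancel₀ ha cross
      have hr : (y / x) ^ q = y / x := by
        rw [div_pow]
        field_simp
        linear_combination cross'
      rcases hfix _ hr with h | h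
      · exact absurd (by
          have := div_eq_zero_iff.mp h
          tauto) hy0
      · field_simp at h
        exact h
  set S : Set (GaloisField 2 k) := {x : GaloisField 2 k | c1 * x ^ 2 ^ (4 * i) + c2 * x ^ 2 ^ (2 * i) + c3 * x = 0} with hS
  have hSfin : S.Finite := Set.toFinite _
  by_cases hc1 : c1 = 0
  · -- degree ≤ 1 case
    subst hc1
    have hab : ¬(c2 = 0 ∧ c3 = 0) := fun ⟨h2, h3⟩ => hc ⟨rfl, h2, h3⟩
    by_cases hS0 : S ⊆ {(0 : GaloisField 2 k)}
    · calc S.ncard ≤ ({(0 : GaloisField 2 k)} : Set (GaloisField 2 k)).ncard :=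
            Set.ncard_le_ncard hS0 (Set.finite_singleton _)
        _ = 1 := Set.ncard_singleton _
        _ ≤ 4 := by norm_num
    · obtain ⟨x₀, hx₀S, hx₀⟩ : ∃ x₀ ∈ S, x₀ ≠ 0 := by
        rw [Set.subset_singleton_iff] at hS0
        push_neg at hS0
        exact hS0
      have hsub : S ⊆ {0, x₀} := by
        intro y hyS
        have hxe : c2 * x₀ ^ q + c3 * x₀ = 0 := by
          have := hx₀S; simp only [hS, Set.mem_setOf_eq, zero_mul, zero_add] at this
          exact this
        have hye : c2 * y ^ q + c3 * y = 0 := by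
          have := hyS; simp only [hS, Set.mem_setOf_eq, zero_mul, zero_add] at this
          exact this
        rcases hdeg1 c2 c3 x₀ y hab hxe hye hx₀ with h | h
        · exact Or.inl h
        · exact Or.inr h
      calc S.ncard ≤ ({0, x₀} : Set (GaloisField 2 k)).ncard := Set.ncard_le_ncard hsub (Set.toFinite _)
        _ ≤ 2 := by
            apply le_trans (Set.ncard_insert_le _ _)
            simp [Set.ncard_singleton]
        _ ≤ 4 := by norm_num
  · -- c1 ≠ 0
    by_cases hS0 : S ⊆ {(0 : GaloisField 2 k)}
    · calc S.ncard ≤ ({(0 : GaloisField 2 k)} : Set (GaloisField 2 k)).ncard :=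
            Set.ncard_le_ncard hS0 (Set.finite_singleton _)
        _ = 1 := Set.ncard_singleton _
        _ ≤ 4 := by norm_num
    obtain ⟨x₀, hx₀S, hx₀⟩ : ∃ x₀ ∈ S, x₀ ≠ 0 := by
      rw [Set.subset_singleton_iff] at hS0
      push_neg at hS0
      exact hS0
    set d1 : GaloisField 2 k := c1 * (x₀ ^ q) ^ q with hd1def
    set d2 : GaloisField 2 k := c2 * x₀ ^ q with hd2def
    have hd1 : d1 ≠ 0 := mul_ne_zero hc1 (pow_ne_zero _ (pow_ne_zero _ hx₀))
    have hx₀e : d1 + d2 + c3 * x₀ = 0 := by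
      have := hx₀S
      simp only [hS, Set.mem_setOf_eq] at this
      rw [hpow4 x₀] at this
      simp only [hd1def, hd2def, ← hq]
      linear_combination this
    -- the auxiliary map
    set w : GaloisField 2 k → GaloisField 2 k := fun x => (x / x₀) ^ q + x / x₀ with hw
    have hwP : ∀ x ∈ S, d1 * (w x) ^ q + (d1 + d2) * (w x) = 0 := by
      intro x hxS
      have hxe : c1 * (x ^ q) ^ q + c2 * x ^ q + c3 * x = 0 := by
        have := hxS; simp only [hS, Set.mem_setOf_eq] at this
        rw [hpow4 x] at this
        exact this
      set u : GaloisField 2 k := x / x₀ with hu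
      have hxu : x = x₀ * u := by rw [hu]; field_simp
      have hM : d1 * (u ^ q) ^ q + d2 * u ^ q + (d1 + d2) * u = 0 := by
        have hxq : x ^ q = x₀ ^ q * u ^ q := by rw [hxu, mul_pow]
        have hxqq : (x ^ q) ^ q = (x₀ ^ q) ^ q * (u ^ q) ^ q := by rw [hxq, mul_pow]
        rw [hxqq, hxq, hxu] at hxe
        have hd3 : c3 * x₀ = d1 + d2 := by
          linear_combination hx₀e - (d1 + d2) * htwo
        simp only [hd1def, hd2def]
        rw [← hd3]
        linear_combination hxe
      have hwx : w x = u ^ q + u := by rw [hw]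
      rw [hwx, hadd]
      linear_combination hM + (d1 * u ^ q) * htwo
    have hwzero : ∀ x ∈ S, w x = 0 → x = 0 ∨ x = x₀ := by
      intro x _ hwx
      have hr : (x / x₀) ^ q = x / x₀ := by
        have : (x / x₀) ^ q + x / x₀ = 0 := hwx
        linear_combination this - (x / x₀) * htwo
      rcases hfix _ hr with h | h
      · left
        rcases div_eq_zero_iff.mp h with h | h
        · exact h
        · exact absurd h hx₀
      · right
        field_simp at h
        exact h
    have hwadd : ∀ x y : GaloisField 2 k, w (x + y) = w x + w y := by
      intro x y
      simp only [hw]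
      rw [add_div, hadd]
      ring
    have hSadd : ∀ x ∈ S, ∀ y ∈ S, x + y ∈ S := by
      intro x hx y hy
      simp only [hS, Set.mem_setOf_eq] at hx hy ⊢
      have h4 : (x + y) ^ 2 ^ (4 * i) = x ^ 2 ^ (4 * i) + y ^ 2 ^ (4 * i) :=
        add_pow_char_pow x y 2 (4 * i)
      have h2 : (x + y) ^ 2 ^ (2 * i) = x ^ 2 ^ (2 * i) + y ^ 2 ^ (2 * i) :=
        add_pow_char_pow x y 2 (2 * i)
      rw [h4, h2]
      linear_combination hx + hy
    by_cases hS2 : S ⊆ {0, x₀}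
    · calc S.ncard ≤ ({0, x₀} : Set (GaloisField 2 k)).ncard := Set.ncard_le_ncard hS2 (Set.toFinite _)
        _ ≤ 2 := by
            apply le_trans (Set.ncard_insert_le _ _)
            simp [Set.ncard_singleton]
        _ ≤ 4 := by norm_num
    obtain ⟨y₀, hy₀S, hy₀⟩ : ∃ y₀ ∈ S, y₀ ∉ ({0, x₀} : Set (GaloisField 2 k)) := by
      rw [Set.not_subset] at hS2
      exact hS2
    have hwy₀ : w y₀ ≠ 0 := by
      intro h
      rcases hwzero y₀ hy₀S h with h' | h' <;> simp [h'] at hy₀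
    have hsub : S ⊆ {0, x₀, y₀, y₀ + x₀} := by
      intro x hxS
      have hab : ¬(d1 = 0 ∧ d1 + d2 = 0) := fun ⟨h, _⟩ => hd1 h
      rcases hdeg1 d1 (d1 + d2) (w y₀) (w x) hab (hwP y₀ hy₀S) (hwP x hxS) hwy₀ with h | h
      · rcases hwzero x hxS h with h' | h'
        · exact Or.inl h'
        · exact Or.inr (Or.inl h')
      · -- w x = w y₀, so w (x + y₀) = 0
        have hxy : x + y₀ ∈ S := hSadd x hxS y₀ hy₀S
        have : w (x + y₀) = 0 := by
          rw [hwadd, h]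
          linear_combination (w y₀) * htwo
        rcases hwzero _ hxy this with h' | h'
        · -- x + y₀ = 0 ⇒ x = y₀ (char 2)
          right; right; left
          have hx' : x = -y₀ := add_eq_zero_iff_eq_neg.mp h'
          rw [hx']
          linear_combination -y₀ * htwo
        · right; right; right
          have hx' : x = x₀ - y₀ := eq_sub_of_add_eq h'
          show x = y₀ + x₀
          rw [hx']
          linear_combination -y₀ * htwo
    calc S.ncard ≤ ({0, x₀, y₀, y₀ + x₀} : Set (GaloisField 2 k)).ncard :=
          Set.ncard_le_ncard hsub (Set.toFinite _)
      _ ≤ 4 := by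
          apply le_trans (Set.ncard_insert_le _ _)
          have : ({x₀, y₀, y₀ + x₀} : Set (GaloisField 2 k)).ncard ≤ 3 := by
            apply le_trans (Set.ncard_insert_le _ _)
            have : ({y₀, y₀ + x₀} : Set (GaloisField 2 k)).ncard ≤ 2 := by
              apply le_trans (Set.ncard_insert_le _ _)
              simp [Set.ncard_singleton]
            omega
          omega
end

section
/- Let k be an odd positive integer, i a positive integer with gcd(i,k) = 1, F = GaloisField 2 k, and α ∈ F with α ≠ 0 and α ≠ 1. For u, v ∈ F, the following three equations hold simultaneously: (1) (αv+u)·(α·(αu+v)^(2^i) + u^(2^i)) + (αv+u)^(2^i)·(α^(2^i)·(αu+v) + u) = 0; (2) (αv+u)·(αu+v) + (α^(2^i)·(αu+v) + u)·(α^(2^i)·(αv+u) + v) = 0; (3) (αv+u)·(αu+v)^(2^i) + (α^(2^i)·(αu+v) + u)·(α·(αv+u)^(2^i) + v^(2^i)) = 0; if and only if u, v satisfy αv + u = 0 and α^(2^i)·(αu+v) + u = 0. -/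
private lemma gf_pow_pow_iter {F : Type*} [Monoid F] {d : ℕ} {z : F} (h : z ^ 2 ^ d = z) :
    ∀ n : ℕ, z ^ 2 ^ (d * n) = z := by
  intro n
  induction n with
  | zero => simp
  | succ n ih =>
    have he : 2 ^ (d * (n + 1)) = 2 ^ (d * n) * 2 ^ d := by rw [mul_add, mul_one, pow_add]
    rw [he, pow_mul, ih, h]

private lemma gf_sq_eq (k i : ℕ) (hk : Odd k) (hkpos : 0 < k) (hipos : 0 < i)
    (hgcd : Nat.gcd i k = 1) (z : GaloisField 2 k) (hz : z ^ 2 ^ (2 * i) = z) :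
    z = 0 ∨ z = 1 := by
  haveI : Fintype (GaloisField 2 k) := Fintype.ofFinite _
  have hcard : Fintype.card (GaloisField 2 k) = 2 ^ k := by
    rw [← Nat.card_eq_fintype_card, GaloisField.card 2 k hkpos.ne']
  have hzk : z ^ 2 ^ k = z := by rw [← hcard]; exact FiniteField.pow_card z
  have hsq : z ^ 2 = z := by
    by_cases hk1 : k = 1
    · subst hk1; simpa using hzk
    · have hco : Nat.Coprime (2 * i) k :=
        Nat.Coprime.mul (Nat.coprime_two_left.mpr hk) hgcd
      obtain ⟨b, -, hb⟩ := Nat.exists_mul_mod_eq_one_of_coprime hco (by omega)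
      have hdiv := Nat.div_add_mod (2 * i * b) k
      rw [hb] at hdiv
      have h1 : z ^ 2 ^ (2 * i * b) = z := gf_pow_pow_iter hz b
      have h2 : z ^ 2 ^ (k * (2 * i * b / k) + 1) = z ^ 2 := by
        rw [pow_succ, pow_mul, gf_pow_pow_iter hzk]
      rw [← hdiv, h2] at h1
      exact h1
  have hz0 : z * (z - 1) = 0 := by linear_combination hsq
  rcases mul_eq_zero.mp hz0 with h | h
  · exact Or.inl h
  · exact Or.inr (by linear_combination h)

private lemma gf_frob_inj (k i : ℕ) (x y : GaloisField 2 k) (h : x ^ 2 ^ i = y ^ 2 ^ i) :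
    x = y := by
  have htwo : (2 : GaloisField 2 k) = 0 := CharTwo.two_eq_zero
  have h2 : (x + y) ^ 2 ^ i = 0 := by
    rw [add_pow_char_pow, h, CharTwo.add_self_eq_zero]
  have h3 : x + y = 0 := (pow_eq_zero_iff (pow_ne_zero i two_ne_zero)).mp h2
  linear_combination h3 - y * htwo

private lemma gf_pow_q1_inj (k i : ℕ) (hk : Odd k) (hkpos : 0 < k) (hipos : 0 < i)
    (hgcd : Nat.gcd i k = 1) (x y : GaloisField 2 k)
    (h : x ^ (2 ^ i + 1) = y ^ (2 ^ i + 1)) : x = y := by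
  by_cases hy : y = 0
  · subst hy
    rw [zero_pow (by positivity)] at h
    exact (pow_eq_zero_iff (by positivity)).mp h
  · have hx : x ≠ 0 := by
      intro hx0
      apply hy
      rw [hx0, zero_pow (by positivity)] at h
      exact (pow_eq_zero_iff (by positivity)).mp h.symm
    have hz1 : (x / y) ^ (2 ^ i + 1) = 1 := by
      rw [div_pow, h, div_self (pow_ne_zero _ hy)]
    have hzz : (x / y) ^ 2 ^ (2 * i) = x / y := by
      have he : 2 ^ (2 * i) = (2 ^ i + 1) * (2 ^ i - 1) + 1 := by
        obtain ⟨t, ht⟩ : ∃ t, 2 ^ i = t + 1 :=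
          ⟨2 ^ i - 1, (Nat.succ_pred_eq_of_pos (by positivity)).symm⟩
        rw [two_mul, pow_add, ht]
        simp only [Nat.add_sub_cancel]
        ring
      rw [he, pow_add, pow_one, pow_mul, hz1, one_pow, one_mul]
    rcases gf_sq_eq k i hk hkpos hipos hgcd _ hzz with h0 | h1
    · exact absurd h0 (div_ne_zero hx hy)
    · exact (div_eq_one_iff_eq hy).mp h1

/-- Lemma 3.1: for `k` odd, `gcd(i,k) = 1`, `α ∈ GaloisField 2 k` with `α ≠ 0, 1`,
the three equations in `u, v` hold simultaneously iff `αv + u = 0` and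
`α^(2^i)·(αu+v) + u = 0`. -/
theorem butterfly_diff_key_lemma (k i : ℕ) (hk : Odd k) (hkpos : 0 < k)
    (hipos : 0 < i) (hgcd : Nat.gcd i k = 1)
    (α : GaloisField 2 k) (hα0 : α ≠ 0) (hα1 : α ≠ 1) (u v : GaloisField 2 k) :
    ((α * v + u) * (α * (α * u + v) ^ 2 ^ i + u ^ 2 ^ i)
        + (α * v + u) ^ 2 ^ i * (α ^ 2 ^ i * (α * u + v) + u) = 0 ∧
     (α * v + u) * (α * u + v)
        + (α ^ 2 ^ i * (α * u + v) + u) * (α ^ 2 ^ i * (α * v + u) + v) = 0 ∧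
     (α * v + u) * (α * u + v) ^ 2 ^ i
        + (α ^ 2 ^ i * (α * u + v) + u) * (α * (α * v + u) ^ 2 ^ i + v ^ 2 ^ i) = 0)
    ↔ (α * v + u = 0 ∧ α ^ 2 ^ i * (α * u + v) + u = 0) := by
  have htwo : (2 : GaloisField 2 k) = 0 := CharTwo.two_eq_zero
  constructor
  · rintro ⟨h1, h2, h3⟩
    by_cases hA : α * v + u = 0
    · refine ⟨hA, ?_⟩
      rw [hA] at h2
      have h2' : (α ^ 2 ^ i * (α * u + v) + u) * v = 0 := by linear_combination h2
      rcases mul_eq_zero.mp h2' with hC | hv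
      · exact hC
      · have hu : u = 0 := by rw [hv] at hA; simpa using hA
        rw [hu, hv]; ring
    · exfalso
      obtain ⟨β, hβ⟩ : ∃ x, x = α ^ 2 ^ i := ⟨_, rfl⟩
      obtain ⟨γ, hγ⟩ : ∃ x, x = β ^ 2 ^ i := ⟨_, rfl⟩
      obtain ⟨U, hU⟩ : ∃ x, x = u ^ 2 ^ i := ⟨_, rfl⟩
      obtain ⟨V, hV⟩ : ∃ x, x = v ^ 2 ^ i := ⟨_, rfl⟩
      have epA : (α * v + u) ^ 2 ^ i = β * V + U := by
        rw [add_pow_char_pow, mul_pow, hβ, hU, hV]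
      have epB : (α * u + v) ^ 2 ^ i = β * U + V := by
        rw [add_pow_char_pow, mul_pow, hβ, hU, hV]
      rw [epA, epB, ← hβ, ← hU] at h1
      rw [← hβ] at h2
      rw [epA, epB, ← hβ, ← hV] at h3
      -- h1 : (α*v+u) * (α*(β*U+V) + U) + (β*V+U) * (β*(α*u+v) + u) = 0
      -- h2 : (α*v+u)*(α*u+v) + (β*(α*u+v)+u)*(β*(α*v+u)+v) = 0
      -- h3 : (α*v+u)*(β*U+V) + (β*(α*u+v)+u)*(α*(β*V+U)+V) = 0
      have hβne : β + 1 ≠ 0 := by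
        intro hb
        have hβ1 : β = 1 := by linear_combination hb - htwo
        have he : α ^ 2 ^ i = 1 ^ 2 ^ i := by rw [one_pow, ← hβ]; exact hβ1
        exact hα1 (gf_frob_inj k i α 1 he)
      have hm : α * β + α + β ≠ 0 := by
        intro hm0
        have e1 : (α + 1) ^ (2 ^ i + 1) = 1 ^ (2 ^ i + 1) := by
          rw [one_pow, pow_succ, add_pow_char_pow, one_pow, ← hβ]
          linear_combination hm0
        have e2 := gf_pow_q1_inj k i hk hkpos hipos hgcd _ _ e1
        exact hα0 (by linear_combination e2)
      have hmul : (α * v + u) * ((β*V+U)*(β*U+V) + (α*(β*U+V)+U)*(α*(β*V+U)+V)) = 0 := by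
        linear_combination (α*(β*V+U)+V) * h1 + (β*V+U) * h3 + (- u*U*V - β*v*U*V - β*u*V^2 - β^2*v*V^2 - α*u*U^2 - α*β*v*U^2 - 3*α*β*u*U*V - 2*α*β^2*v*U*V - 2*α*β^2*u*V^2 - α*β^3*v*V^2 - α^2*β*u*U^2 - 2*α^2*β^2*u*U*V - α^2*β^3*u*V^2) * htwo
      have key : (β*V+U)*(β*U+V) + (α*(β*U+V)+U)*(α*(β*V+U)+V) = 0 :=
        (mul_eq_zero.mp hmul).resolve_left hA
      have h2q : (β*V+U)*(β*U+V) + (γ*(β*U+V)+U)*(γ*(β*V+U)+V) = 0 := by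
        have e : ((α*v+u)*(α*u+v) + (β*(α*u+v)+u)*(β*(α*v+u)+v)) ^ 2 ^ i = 0 := by
          rw [h2, zero_pow (pow_ne_zero i two_ne_zero)]
        simp only [add_pow_char_pow, mul_pow] at e
        rw [← hβ, ← hγ, ← hU, ← hV] at e
        linear_combination e
      have hI : (α*β^2+α+β) * ((β+1)*(U+V))^2
          + (β+1)^2*(α*β+α+β)^2*((β*V+U)*(β*U+V)) = 0 := by
        linear_combination (β+1)^4 * key + (- U*V - 3*β*U*V - β^2*V^2 - 4*β^2*U*V - β^2*U^2 - 2*β^3*V^2 - 4*β^3*U*V - 2*β^3*U^2 - β^4*V^2 - 3*β^4*U*V - β^4*U^2 - β^5*U*V + α*U*V - α*β*V^2 + 2*α*β*U*V - α*β*U^2 - α*β^2*V^2 + α*β^2*U*V - α*β^2*U^2 + 2*α*β^3*V^2 + 2*α*β^3*U^2 + 3*α*β^4*V^2 + α*β^4*U*V + 3*α*β^4*U^2 + α*β^5*V^2 + 2*α*β^5*U*V + α*β^5*U^2 + α*β^6*U*V) * htwo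
      have hIIq : (γ*β^2+β+γ) * ((β+1)*(U+V))^2
          + (β+1)^2*(β*γ+β+γ)^2*((β*V+U)*(β*U+V)) = 0 := by
        linear_combination (β+1)^4 * h2q + (- U*V + γ*U*V - 3*β*U*V - β*γ*V^2 + 2*β*γ*U*V - β*γ*U^2 - β^2*V^2 - 4*β^2*U*V - β^2*U^2 - β^2*γ*V^2 + β^2*γ*U*V - β^2*γ*U^2 - 2*β^3*V^2 - 4*β^3*U*V - 2*β^3*U^2 + 2*β^3*γ*V^2 + 2*β^3*γ*U^2 - β^4*V^2 - 3*β^4*U*V - β^4*U^2 + 3*β^4*γ*V^2 + β^4*γ*U*V + 3*β^4*γ*U^2 - β^5*U*V + β^5*γ*V^2 + 2*β^5*γ*U*V + β^5*γ*U^2 + β^6*γ*U*V) * htwo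
      have hfin : (α + γ) * ((α*β^2*γ + (α+β)*(β+γ)) * ((β+1)^4 * (U+V)^2)) = 0 := by
        linear_combination (β*γ+β+γ)^2 * hI + (α*β+α+β)^2 * hIIq + (- β^2*γ*V^2 - 2*β^2*γ*U*V - β^2*γ*U^2 - β^2*γ^2*U*V - β^3*V^2 - 2*β^3*U*V - β^3*U^2 - 2*β^3*γ*V^2 - 6*β^3*γ*U*V - 2*β^3*γ*U^2 - β^3*γ^2*V^2 - 4*β^3*γ^2*U*V - β^3*γ^2*U^2 - 2*β^4*V^2 - 5*β^4*U*V - 2*β^4*U^2 - 3*β^4*γ*V^2 - 8*β^4*γ*U*V - 3*β^4*γ*U^2 - 4*β^4*γ^2*V^2 - 7*β^4*γ^2*U*V - 4*β^4*γ^2*U^2 - 2*β^5*V^2 - 4*β^5*U*V - 2*β^5*U^2 - 6*β^5*γ*V^2 - 8*β^5*γ*U*V - 6*β^5*γ*U^2 - 6*β^5*γ^2*V^2 - 8*β^5*γ^2*U*V - 6*β^5*γ^2*U^2 - 2*β^6*V^2 - 2*β^6*U*V - 2*β^6*U^2 - 6*β^6*γ*V^2 - 8*β^6*γ*U*V - 6*β^6*γ*U^2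 - 4*β^6*γ^2*V^2 - 7*β^6*γ^2*U*V - 4*β^6*γ^2*U^2 - β^7*V^2 - 2*β^7*U*V - β^7*U^2 - 2*β^7*γ*V^2 - 6*β^7*γ*U*V - 2*β^7*γ*U^2 - β^7*γ^2*V^2 - 4*β^7*γ^2*U*V - β^7*γ^2*U^2 - β^8*U*V - 2*β^8*γ*U*V - β^8*γ^2*U*V - α*β*γ*V^2 - 2*α*β*γ*U*V - α*β*γ*U^2 - 2*α*β*γ^2*U*V - α*β^2*V^2 - 2*α*β^2*U*V - α*β^2*U^2 - 2*α*β^2*γ*V^2 - 8*α*β^2*γ*U*V - 2*α*β^2*γ*U^2 - 2*α*β^2*γ^2*V^2 - 10*α*β^2*γ^2*U*V - 2*α*β^2*γ^2*U^2 - 2*α*β^3*V^2 - 6*α*β^3*U*V - 2*α*β^3*U^2 - 6*α*β^3*γ*V^2 - 20*α*β^3*γ*U*V - 6*α*β^3*γ*U^2 - 10*α*β^3*γ^2*V^2 - 22*α*β^3*γ^2*U*V - 10*α*β^3*γ^2*U^2 - 3*α*β^4*V^2 - 8*α*β^4*U*V - 3*α*β^4*U^2 - 20*α*β^4*γ*V^2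 - 36*α*β^4*γ*U*V - 20*α*β^4*γ*U^2 - 20*α*β^4*γ^2*V^2 - 30*α*β^4*γ^2*U*V - 20*α*β^4*γ^2*U^2 - 6*α*β^5*V^2 - 8*α*β^5*U*V - 6*α*β^5*U^2 - 29*α*β^5*γ*V^2 - 42*α*β^5*γ*U*V - 29*α*β^5*γ*U^2 - 20*α*β^5*γ^2*V^2 - 30*α*β^5*γ^2*U*V - 20*α*β^5*γ^2*U^2 - 6*α*β^6*V^2 - 8*α*β^6*U*V - 6*α*β^6*U^2 - 18*α*β^6*γ*V^2 - 32*α*β^6*γ*U*V - 18*α*β^6*γ*U^2 - 10*α*β^6*γ^2*V^2 - 22*α*β^6*γ^2*U*V - 10*α*β^6*γ^2*U^2 - 2*α*β^7*V^2 - 6*α*β^7*U*V - 2*α*β^7*U^2 - 4*α*β^7*γ*V^2 - 16*α*β^7*γ*U*V - 4*α*β^7*γ*U^2 - 2*α*β^7*γ^2*V^2 - 10*α*β^7*γ^2*U*V - 2*α*β^7*γ^2*U^2 - 2*α*β^8*U*V - 4*α*β^8*γ*U*V - 2*α*β^8*γ^2*U*V - α^2*γ^2*U*V - 2*α^2*β*γ*U*V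 - α^2*β*γ^2*V^2 - 6*α^2*β*γ^2*U*V - α^2*β*γ^2*U^2 - α^2*β^2*U*V - 2*α^2*β^2*γ*V^2 - 10*α^2*β^2*γ*U*V - 2*α^2*β^2*γ*U^2 - 6*α^2*β^2*γ^2*V^2 - 16*α^2*β^2*γ^2*U*V - 6*α^2*β^2*γ^2*U^2 - α^2*β^3*V^2 - 4*α^2*β^3*U*V - α^2*β^3*U^2 - 10*α^2*β^3*γ*V^2 - 22*α^2*β^3*γ*U*V - 10*α^2*β^3*γ*U^2 - 15*α^2*β^3*γ^2*V^2 - 26*α^2*β^3*γ^2*U*V - 15*α^2*β^3*γ^2*U^2 - 4*α^2*β^4*V^2 - 7*α^2*β^4*U*V - 4*α^2*β^4*U^2 - 20*α^2*β^4*γ*V^2 - 30*α^2*β^4*γ*U*V - 20*α^2*β^4*γ*U^2 - 20*α^2*β^4*γ^2*V^2 - 30*α^2*β^4*γ^2*U*V - 20*α^2*β^4*γ^2*U^2 - 6*α^2*β^5*V^2 - 8*α^2*β^5*U*V - 6*α^2*β^5*U^2 - 20*α^2*β^5*γ*V^2 - 30*α^2*β^5*γ*U*V - 20*α^2*β^5*γ*U^2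 - 15*α^2*β^5*γ^2*V^2 - 26*α^2*β^5*γ^2*U*V - 15*α^2*β^5*γ^2*U^2 - 4*α^2*β^6*V^2 - 7*α^2*β^6*U*V - 4*α^2*β^6*U^2 - 10*α^2*β^6*γ*V^2 - 22*α^2*β^6*γ*U*V - 10*α^2*β^6*γ*U^2 - 6*α^2*β^6*γ^2*V^2 - 16*α^2*β^6*γ^2*U*V - 6*α^2*β^6*γ^2*U^2 - α^2*β^7*V^2 - 4*α^2*β^7*U*V - α^2*β^7*U^2 - 2*α^2*β^7*γ*V^2 - 10*α^2*β^7*γ*U*V - 2*α^2*β^7*γ*U^2 - α^2*β^7*γ^2*V^2 - 6*α^2*β^7*γ^2*U*V - α^2*β^7*γ^2*U^2 - α^2*β^8*U*V - 2*α^2*β^8*γ*U*V - α^2*β^8*γ^2*U*V) * htwo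
      rcases mul_eq_zero.mp hfin with hac | hrest
      · -- α + γ = 0 : then α^(2^(2i)) = α, so α ∈ {0,1}, contradiction
        have hγα : γ = α ^ 2 ^ (2 * i) := by
          rw [hγ, hβ, ← pow_mul, ← pow_add, two_mul]
        have hfix : α ^ 2 ^ (2 * i) = α := by
          rw [← hγα]; linear_combination hac - α * htwo
        rcases gf_sq_eq k i hk hkpos hipos hgcd α hfix with h | h
        · exact hα0 h
        · exact hα1 h
      · rcases mul_eq_zero.mp hrest with hN | hlast
        · -- N = 0 : (α+β)^(q+1) = (αβ)^(q+1), so α+β = αβ, so m = 0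
          have hNq : (α + β) ^ (2 ^ i + 1) = (α * β) ^ (2 ^ i + 1) := by
            rw [pow_succ, pow_succ, add_pow_char_pow, mul_pow, ← hβ, ← hγ]
            linear_combination hN - α*β^2*γ * htwo
          have e2 := gf_pow_q1_inj k i hk hkpos hipos hgcd _ _ hNq
          exact hm (by linear_combination (α+β) * htwo - e2)
        · rcases mul_eq_zero.mp hlast with hb4 | hUV2
          · exact hβne ((pow_eq_zero_iff (by norm_num)).mp hb4)
          · have hUV0 : U + V = 0 := (pow_eq_zero_iff (by norm_num)).mp hUV2
            have hUV : U = V := by linear_combination hUV0 - V * htwo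
            have huv : u = v := by
              apply gf_frob_inj k i
              rw [← hU, ← hV]; exact hUV
            rw [huv] at h2
            have hv0 : (α*β+α+β)^2 * v^2 = 0 := by
              linear_combination h2 + (- v^2 - β*v^2 - α*v^2 + α^2*β*v^2) * htwo
            rcases mul_eq_zero.mp hv0 with h | h
            · exact hm ((pow_eq_zero_iff (by norm_num)).mp h)
            · have hvz : v = 0 := (pow_eq_zero_iff (by norm_num)).mp h
              apply hA
              rw [huv, hvz]; ring
  · rintro ⟨hA, hC⟩
    refine ⟨?_, ?_, ?_⟩ <;> rw [hA, hC] <;> simp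
end

section
/- Let k be an odd positive integer, i a positive integer with gcd(i,k) = 1, t a natural number with 0 ≤ t ≤ k−1, e = (2^i + 1)·2^t, F = GaloisField 2 k, and α ∈ F with α ≠ 0 and α ≠ 1. Define V : F × F → F × F by V(x,y) = ((αx + y)^e + x^e, (x + αy)^e + y^e). Then V has algebraic degree 2; precisely: (a) for all (u1,v1), (u2,v2) ∈ F × F, the function (x,y) ↦ V(x+u1+u2, y+v1+v2) + V(x+u1, y+v1) + V(x+u2, y+v2) + V(x,y) is constant on F × F, and (b) there exists (u,v) ∈ F × F such that the function (x,y) ↦ V(x+u, y+v) + V(x,y) is not constant on F × F. -/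
/-- The closed butterfly with branch size `k`, exponent `e` and coefficient `α`. -/
noncomputable def closedButterfly (k e : ℕ) (α : GaloisField 2 k) :
    GaloisField 2 k × GaloisField 2 k → GaloisField 2 k × GaloisField 2 k :=
  fun p => ((α * p.1 + p.2) ^ e + p.1 ^ e, (p.1 + α * p.2) ^ e + p.2 ^ e)

section Aux

variable {F : Type*} [Field F] [CharP F 2]

private lemma frobF (n : ℕ) (x y : F) : (x + y) ^ (2:ℕ) ^ n = x ^ (2:ℕ) ^ n + y ^ (2:ℕ) ^ n :=
  add_pow_char_pow x y 2 n

/-- Freshman's dream for the exponent `(2^i+1)·2^t`, with the biadditive error term. -/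
private lemma keyF (i t : ℕ) (z w : F) :
    (z + w) ^ ((2 ^ i + 1) * 2 ^ t)
      = z ^ ((2 ^ i + 1) * 2 ^ t) + w ^ ((2 ^ i + 1) * 2 ^ t)
        + (z ^ 2 ^ i * w + z * w ^ 2 ^ i) ^ 2 ^ t := by
  have h1 : (z + w) ^ (2 ^ i + 1) =
      (z ^ (2^i+1) + w ^ (2^i+1)) + (z ^ 2 ^ i * w + z * w ^ 2 ^ i) := by
    rw [pow_succ, frobF]; ring
  rw [pow_mul, h1, frobF, frobF, ← pow_mul, ← pow_mul]

/-- The error term is additive in its second argument. -/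
private lemma B_add_right (i t : ℕ) (z w1 w2 : F) :
    (z ^ 2 ^ i * (w1 + w2) + z * (w1 + w2) ^ 2 ^ i) ^ 2 ^ t
      = (z ^ 2 ^ i * w1 + z * w1 ^ 2 ^ i) ^ 2 ^ t
        + (z ^ 2 ^ i * w2 + z * w2 ^ 2 ^ i) ^ 2 ^ t := by
  rw [← frobF]
  congr 1
  rw [frobF]
  ring

/-- Second-order derivative of `z ↦ z^e` is constant. -/
private lemma second_deriv (i t : ℕ) (z a b : F) :
    (z + a + b) ^ ((2 ^ i + 1) * 2 ^ t) + (z + a) ^ ((2 ^ i + 1) * 2 ^ t)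
      + (z + b) ^ ((2 ^ i + 1) * 2 ^ t) + z ^ ((2 ^ i + 1) * 2 ^ t)
      = (a ^ 2 ^ i * b + a * b ^ 2 ^ i) ^ 2 ^ t := by
  have h2 : (2 : F) = 0 := by
    have := CharP.cast_eq_zero F 2; exact_mod_cast this
  have e1 : (z + a + b) ^ ((2 ^ i + 1) * 2 ^ t)
      = (z + a) ^ ((2 ^ i + 1) * 2 ^ t) + b ^ ((2 ^ i + 1) * 2 ^ t)
        + ((z+a) ^ 2 ^ i * b + (z+a) * b ^ 2 ^ i) ^ 2 ^ t := keyF i t (z+a) b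
  have e2 : (z + b) ^ ((2 ^ i + 1) * 2 ^ t)
      = z ^ ((2 ^ i + 1) * 2 ^ t) + b ^ ((2 ^ i + 1) * 2 ^ t)
        + (z ^ 2 ^ i * b + z * b ^ 2 ^ i) ^ 2 ^ t := keyF i t z b
  have e3 : ((z + a) ^ 2 ^ i * b + (z + a) * b ^ 2 ^ i) ^ 2 ^ t
      = (z ^ 2 ^ i * b + z * b ^ 2 ^ i) ^ 2 ^ t
        + (a ^ 2 ^ i * b + a * b ^ 2 ^ i) ^ 2 ^ t := by
    rw [← frobF]
    congr 1
    rw [frobF]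
    ring
  rw [e1, e2, e3]
  linear_combination ((z+a) ^ ((2 ^ i + 1) * 2 ^ t) + b ^ ((2 ^ i + 1) * 2 ^ t)
    + z ^ ((2 ^ i + 1) * 2 ^ t)
    + (z ^ 2 ^ i * b + z * b ^ 2 ^ i) ^ 2 ^ t) * h2

/-- Iterated Frobenius fixed point. -/
private lemma fix_pow (n j : ℕ) (x : F) (h : x ^ (2:ℕ) ^ n = x) :
    x ^ (2:ℕ) ^ (n * j) = x := by
  induction j with
  | zero => simp
  | succ j ih =>
    rw [Nat.mul_succ, pow_add, pow_mul, ih, h]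

end Aux

/-- Theorem 3.4 (1): the closed butterfly with `k` odd, `gcd(i,k) = 1`, exponent
`e = (2^i+1)·2^t` and coefficient `α ≠ 0, 1` has algebraic degree 2: all second-order
discrete derivatives are constant, and some first-order derivative is not constant. -/
theorem closedButterfly_algebraic_degree_two (k i t : ℕ) (hk : Odd k)
    (hkpos : 0 < k) (hipos : 0 < i) (hgcd : Nat.gcd i k = 1) (ht : t ≤ k - 1)
    (α : GaloisField 2 k) (hα0 : α ≠ 0) (hα1 : α ≠ 1) :
    (∀ u1 v1 u2 v2 : GaloisField 2 k, ∃ C : GaloisField 2 k × GaloisField 2 k,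
      ∀ x y : GaloisField 2 k,
        closedButterfly k ((2 ^ i + 1) * 2 ^ t) α (x + u1 + u2, y + v1 + v2)
          + closedButterfly k ((2 ^ i + 1) * 2 ^ t) α (x + u1, y + v1)
          + closedButterfly k ((2 ^ i + 1) * 2 ^ t) α (x + u2, y + v2)
          + closedButterfly k ((2 ^ i + 1) * 2 ^ t) α (x, y) = C) ∧
    (∃ u v : GaloisField 2 k, ¬ ∃ C : GaloisField 2 k × GaloisField 2 k,
      ∀ x y : GaloisField 2 k,
        closedButterfly k ((2 ^ i + 1) * 2 ^ t) α (x + u, y + v)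
          + closedButterfly k ((2 ^ i + 1) * 2 ^ t) α (x, y) = C) := by
  have hepos : (2 ^ i + 1) * 2 ^ t ≠ 0 := by positivity
  have h2F : (2 : GaloisField 2 k) = 0 := by
    have := CharP.cast_eq_zero (GaloisField 2 k) 2; exact_mod_cast this
  constructor
  · -- part (a): second derivatives constant
    intro u1 v1 u2 v2
    refine ⟨(((α*u1+v1) ^ 2^i * (α*u2+v2) + (α*u1+v1) * (α*u2+v2) ^ 2^i) ^ 2^t
        + (u1 ^ 2^i * u2 + u1 * u2 ^ 2^i) ^ 2^t,
      ((u1+α*v1) ^ 2^i * (u2+α*v2) + (u1+α*v1) * (u2+α*v2) ^ 2^i) ^ 2^t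
        + (v1 ^ 2^i * v2 + v1 * v2 ^ 2^i) ^ 2^t), ?_⟩
    intro x y
    simp only [closedButterfly, Prod.mk_add_mk, Prod.mk.injEq]
    constructor
    · have r1 : α * (x + u1 + u2) + (y + v1 + v2)
          = (α * x + y) + (α * u1 + v1) + (α * u2 + v2) := by ring
      have r2 : α * (x + u1) + (y + v1) = (α * x + y) + (α * u1 + v1) := by ring
      have r3 : α * (x + u2) + (y + v2) = (α * x + y) + (α * u2 + v2) := by ring
      rw [r1, r2, r3]
      have h1 := second_deriv i t (α * x + y) (α * u1 + v1) (α * u2 + v2)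
      have h2 := second_deriv i t x u1 u2
      linear_combination h1 + h2
    · have r1 : (x + u1 + u2) + α * (y + v1 + v2)
          = (x + α * y) + (u1 + α * v1) + (u2 + α * v2) := by ring
      have r2 : (x + u1) + α * (y + v1) = (x + α * y) + (u1 + α * v1) := by ring
      have r3 : (x + u2) + α * (y + v2) = (x + α * y) + (u2 + α * v2) := by ring
      rw [r1, r2, r3]
      have h1 := second_deriv i t (x + α * y) (u1 + α * v1) (u2 + α * v2)
      have h2 := second_deriv i t y v1 v2
      linear_combination h1 + h2
  · -- part (b): the derivative in direction (0,1) is not constant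
    refine ⟨0, 1, ?_⟩
    rintro ⟨C, hC⟩
    -- key: α ^ 2 ^ i ≠ α
    have halpha : α ^ (2:ℕ) ^ i ≠ α := by
      intro hfix
      rcases Nat.lt_or_ge k 2 with hk2 | hk2
      · -- k = 1 is impossible since α ∉ {0, 1}
        have hk1 : k = 1 := by omega
        subst hk1
        haveI : Fintype (GaloisField 2 1) := Fintype.ofFinite _
        have hcard : Fintype.card (GaloisField 2 1) = 2 := by
          have := GaloisField.card 2 1 one_ne_zero
          rw [Nat.card_eq_fintype_card] at this
          simpa using this
        have h3 : 2 < Fintype.card (GaloisField 2 1) :=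
          Fintype.two_lt_card_iff.mpr ⟨α, 0, 1, hα0, hα1, zero_ne_one⟩
        omega
      · obtain ⟨j, -, hj⟩ := Nat.exists_mul_mod_eq_one_of_coprime hgcd hk2
        haveI : Fintype (GaloisField 2 k) := Fintype.ofFinite _
        have hcard : Fintype.card (GaloisField 2 k) = 2 ^ k := by
          have := GaloisField.card 2 k hkpos.ne'
          rwa [Nat.card_eq_fintype_card] at this
        have hk0 : α ^ (2:ℕ) ^ k = α := by
          have := FiniteField.pow_card α
          rwa [hcard] at this
        have h1 : α ^ (2:ℕ) ^ (i * j) = α := fix_pow i j α hfix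
        have hij : i * j = k * (i * j / k) + 1 := by
          have := Nat.div_add_mod (i * j) k
          omega
        have hsq : α ^ 2 = α := by
          have h4 : α ^ (2:ℕ) ^ (i * j) = α ^ 2 := by
            rw [hij, pow_succ, pow_mul, fix_pow k (i * j / k) α hk0]
          rw [← h4, h1]
        have : α * (α - 1) = 0 := by linear_combination hsq
        rcases mul_eq_zero.mp this with h | h
        · exact hα0 h
        · exact hα1 (sub_eq_zero.mp h)
    have hBne : (α ^ 2 ^ i * 1 + α * 1 ^ 2 ^ i : GaloisField 2 k) ^ 2 ^ t ≠ 0 := by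
      apply pow_ne_zero
      intro h0
      apply halpha
      rw [one_pow, mul_one, mul_one] at h0
      have h3 : α ^ (2:ℕ) ^ i - α = 0 := by rw [CharTwo.sub_eq_add]; exact h0
      exact sub_eq_zero.mp h3
    have h00 : (1 : GaloisField 2 k) = C.1 := by
      have := congrArg Prod.fst (hC 0 0)
      simpa [closedButterfly, zero_pow hepos] using this
    have h0a : (α + 1) ^ ((2 ^ i + 1) * 2 ^ t) + α ^ ((2 ^ i + 1) * 2 ^ t) = C.1 := by
      have := congrArg Prod.fst (hC 0 α)
      simpa [closedButterfly, zero_pow hepos] using this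
    have hBval : (α + 1) ^ ((2 ^ i + 1) * 2 ^ t) + α ^ ((2 ^ i + 1) * 2 ^ t)
        = 1 + (α ^ 2 ^ i * 1 + α * 1 ^ 2 ^ i) ^ 2 ^ t := by
      have hkey := keyF i t α (1 : GaloisField 2 k)
      linear_combination hkey + α ^ ((2 ^ i + 1) * 2 ^ t) * h2F
    rw [hBval, ← h00] at h0a
    exact hBne (by
      linear_combination - h0a + (α ^ 2 ^ i * 1 + α * 1 ^ 2 ^ i) ^ 2 ^ t * h2F)
end

section
/- Let k be an odd positive integer, i a positive integer with gcd(i,k) = 1, F = GaloisField 2 k, and α ∈ F with α ≠ 0 and α ≠ 1. For c, d ∈ F, the following three equations hold simultaneously: (1) (α^(2^i+1)·c + c + d)·(α^(2^i)·c + α·d)^(2^i) + (α^(2^i+1)·c + c + d)^(2^i)·(α·c + α^(2^i)·d) = 0; (2) (α·c + α^(2^i)·d)^(2^i)·(α^(2^i)·c + α·d)^(2^i) + (α^(2^i+1)·c + c + d)^(2^i)·(α^(2^i+1)·d + c + d)^(2^i) = 0; (3) (α^(2^i)·c + α·d)·(α^(2^i)·c + α·d)^(2^i) + (α^(2^i+1)·c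 + c + d)^(2^i)·(α^(2^i+1)·d + c + d) = 0; if and only if c, d satisfy α^(2^i+1)·c + c + d = 0 and α^(2^i)·c + α·d = 0. -/
theorem galois_pow_fix (k m : ℕ) (hkpos : 0 < k) (hco : Nat.Coprime m k)
    (x : GaloisField 2 k) (hx : x ^ 2 ^ m = x) : x = 0 ∨ x = 1 := by
  have : Finite (GaloisField 2 k) := inferInstance
  have ft : Fintype (GaloisField 2 k) := Fintype.ofFinite _
  have hcard : ∀ y : GaloisField 2 k, y ^ 2 ^ k = y := by
    intro y
    have h := FiniteField.pow_card y
    rwa [← Nat.card_eq_fintype_card, GaloisField.card 2 k hkpos.ne'] at h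
  have hsq : x ^ (2:ℕ) = x := by
    rcases Nat.lt_or_ge 1 k with hk1 | hk1
    · obtain ⟨t, -, ht⟩ := Nat.exists_mul_mod_eq_one_of_coprime hco hk1
      have hmt : ∀ s : ℕ, x ^ 2 ^ (m * s) = x := by
        intro s
        induction s with
        | zero => simp
        | succ s ih => rw [Nat.mul_succ, pow_add, pow_mul, ih, hx]
      have hks : ∀ s : ℕ, x ^ 2 ^ (k * s) = x := by
        intro s
        induction s with
        | zero => simp
        | succ s ih => rw [Nat.mul_succ, pow_add, pow_mul, ih, hcard]
      have hdm : m * t = k * (m * t / k) + 1 := by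
        conv_lhs => rw [← Nat.div_add_mod (m * t) k, ht]
      have hfin := hmt t
      rw [hdm, pow_add, pow_mul, pow_one] at hfin
      rwa [hks (m * t / k)] at hfin
    · have hk' : k = 1 := le_antisymm hk1 hkpos
      subst hk'
      simpa using hcard x
  have hz : x * (x - 1) = 0 := by linear_combination hsq
  rcases mul_eq_zero.mp hz with h | h
  · exact Or.inl h
  · exact Or.inr (by linear_combination h)

set_option maxHeartbeats 4000000 in
/-- Lemma 3.5: for `k` odd, `gcd(i,k) = 1`, `α ∈ GaloisField 2 k` with `α ≠ 0, 1`,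
the three equations in `c, d` hold simultaneously iff
`α^(2^i+1)·c + c + d = 0` and `α^(2^i)·c + α·d = 0`. -/
theorem butterfly_walsh_key_lemma (k i : ℕ) (hk : Odd k) (hkpos : 0 < k)
    (hipos : 0 < i) (hgcd : Nat.gcd i k = 1)
    (α : GaloisField 2 k) (hα0 : α ≠ 0) (hα1 : α ≠ 1) (c d : GaloisField 2 k) :
    ((α ^ (2 ^ i + 1) * c + c + d) * (α ^ 2 ^ i * c + α * d) ^ 2 ^ i
        + (α ^ (2 ^ i + 1) * c + c + d) ^ 2 ^ i * (α * c + α ^ 2 ^ i * d) = 0 ∧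
     (α * c + α ^ 2 ^ i * d) ^ 2 ^ i * (α ^ 2 ^ i * c + α * d) ^ 2 ^ i
        + (α ^ (2 ^ i + 1) * c + c + d) ^ 2 ^ i
          * (α ^ (2 ^ i + 1) * d + c + d) ^ 2 ^ i = 0 ∧
     (α ^ 2 ^ i * c + α * d) * (α ^ 2 ^ i * c + α * d) ^ 2 ^ i
        + (α ^ (2 ^ i + 1) * c + c + d) ^ 2 ^ i * (α ^ (2 ^ i + 1) * d + c + d) = 0)
    ↔ (α ^ (2 ^ i + 1) * c + c + d = 0 ∧ α ^ 2 ^ i * c + α * d = 0) := by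
  have hqne : (2:ℕ) ^ i ≠ 0 := (pow_pos (by norm_num) i).ne'
  constructor
  · rintro ⟨h1, -, h3⟩
    by_cases hA : α ^ (2 ^ i + 1) * c + c + d = 0
    · refine ⟨hA, ?_⟩
      rw [hA, zero_pow hqne, zero_mul, add_zero] at h3
      rcases mul_eq_zero.mp h3 with h | h
      · exact h
      · exact (pow_eq_zero_iff hqne).mp h
    · exfalso
      have htwo : (2 : GaloisField 2 k) = 0 := CharTwo.two_eq_zero
      rw [pow_succ] at h1 h3 hA
      set b := α ^ 2 ^ i with hb
      set e := b ^ 2 ^ i with he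
      have hpush : ∀ x y : GaloisField 2 k, (x + y) ^ 2 ^ i = x ^ 2 ^ i + y ^ 2 ^ i :=
        fun x y => add_pow_char_pow x y 2 i
      have hb0 : b ≠ 0 := by rw [hb]; exact pow_ne_zero _ hα0
      have he0 : e ≠ 0 := by rw [he]; exact pow_ne_zero _ hb0
      have hcop : Nat.Coprime i k := hgcd
      have hcop2 : Nat.Coprime (i + i) k := by
        have h2 := (Nat.coprime_two_left.mpr hk).mul hcop
        rwa [two_mul] at h2
      have hab : α ≠ b := by
        intro h
        rcases galois_pow_fix k i hkpos hcop α (by rw [← hb, ← h]) with h0 | h0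
        · exact hα0 h0
        · exact hα1 h0
      have hea : e ≠ α := by
        intro h
        have hfixeq : α ^ 2 ^ (i + i) = α := by
          rw [pow_add, pow_mul, ← hb, ← he, h]
        rcases galois_pow_fix k (i + i) hkpos hcop2 α hfixeq with h0 | h0
        · exact hα0 h0
        · exact hα1 h0
      have hJ : α + b ≠ 0 := by
        intro h
        exact hab (by linear_combination h - b*htwo)
      have hs : α + b + α*b ≠ 0 := by
        intro h0
        have h4 : (α + b + α*b) ^ 2 ^ i = 0 := by rw [h0]; exact zero_pow hqne
        rw [hpush, hpush, mul_pow, ← hb, ← he] at h4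
        exact hea (by linear_combination (1 + e)*h0 + (1 + α)*h4 + (-b - b*e - α - α*e - α*b - α*b*e)*htwo)
      set u := (b * c + α * d) / (b * α * c + c + d) with hu
      set v := u ^ 2 ^ i with hv
      have hBu : b * c + α * d = (b * α * c + c + d) * u := by
        rw [hu, mul_div_cancel₀ _ hA]
      have hBq : (b * c + α * d) ^ 2 ^ i = (b * α * c + c + d) ^ 2 ^ i * v := by
        rw [hBu, mul_pow, hv]
      rw [hBq] at h1 h3
      have hAq : (b * α * c + c + d) ^ 2 ^ i ≠ 0 := pow_ne_zero _ hA
      have hC : α * c + b * d = (b * α * c + c + d) * v := by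
        have h4 : (b * α * c + c + d) ^ 2 ^ i * ((α * c + b * d) - (b * α * c + c + d) * v) = 0 := by
          linear_combination h1 - (b * α * c + c + d)*((b * α * c + c + d) ^ 2 ^ i)*v*htwo
        exact sub_eq_zero.mp ((mul_eq_zero.mp h4).resolve_left hAq)
      have hD : b * α * d + c + d = (b * α * c + c + d) * (u * v) := by
        have h4 : (b * α * c + c + d) ^ 2 ^ i * ((b * α * d + c + d) - (b * α * c + c + d) * (u * v)) = 0 := by
          linear_combination h3 - ((b * α * c + c + d) ^ 2 ^ i * v)*hBu - (b * α * c + c + d)*((b * α * c + c + d) ^ 2 ^ i)*u*v*htwo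
        exact sub_eq_zero.mp ((mul_eq_zero.mp h4).resolve_left hAq)
      have H1 : (α + b*(1 + α)^2) * v + (b + α*(1 + b)^2) * u = (α + b)^2 := by
        have h4 : (b * α * c + c + d) * ((α + b*(1 + α)^2) * v + (b + α*(1 + b)^2) * u - (α + b)^2) = 0 := by
          linear_combination ((b + α + α^2*b))*hC + ((b + α + α*b^2))*hBu + ((b*d*v + b*d*u + b*c*v + b*c*u - b^2*d - b^2*c + α*d*v + α*d*u + α*c*v + α*c*u - 2*α*b*d + α*b*d*v + α*b*d*u - 2*α*b*c + α*b*c*v + α*b*c*u + α*b^2*d*u + α*b^2*c*v + 2*α*b^2*c*u - α*b^3*c - α^2*d - α^2*c + α^2*b*d*v + 2*α^2*b*c*v + α^2*b*c*u - α^2*b^2*d - α^2*b^2*c + α^2*b^2*c*v + α^2*b^2*c*u + α^2*b^3*c*u - α^3*b*c + α^3*b^2*c*v))*htwo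
        exact sub_eq_zero.mp ((mul_eq_zero.mp h4).resolve_left hA)
      have H2 : (α + b)^2 * (u * v) = (b + α*(1 + b)^2) * v + (α + b*(1 + α)^2) * u := by
        have h4 : (b * α * c + c + d) * ((α + b)^2 * (u * v) - ((b + α*(1 + b)^2) * v + (α + b*(1 + α)^2) * u)) = 0 := by
          linear_combination ((b^2 + 2*α*b + α^2))*hD + ((b + α + 2*α*b + α*b^2))*hC + ((b + α + 2*α*b + α^2*b))*hBu + ((-b^2*d + b^2*d*u*v - b^2*c + b^2*c*u*v - 2*α*b*d + 2*α*b*d*u*v - 2*α*b*c + 2*α*b*c*u*v - α*b^2*d - α*b^2*c - α*b^3*d + α*b^3*c*u*v - α^2*d + α^2*d*u*v - α^2*c + α^2*c*u*v - α^2*b*d - α^2*b*c - α^2*b^2*d - α^2*b^2*c + 2*α^2*b^2*c*u*v - α^3*b*d + α^3*b*c*u*v))*htwo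
        exact sub_eq_zero.mp ((mul_eq_zero.mp h4).resolve_left hA)
      have hu0 : u ≠ 0 := by
        intro h
        have hB0 : b * c + α * d = 0 := by rw [hBu, h, mul_zero]
        have hv0 : v = 0 := by rw [hv, h]; exact zero_pow hqne
        have hC0 : α * c + b * d = 0 := by rw [hC, hv0, mul_zero]
        have hc0 : c = 0 := by
          have h4 : (α + b)^2 * c = 0 := by
            linear_combination (α)*hC0 + (b)*hB0 + ((-(α*b*d) + α*b*c))*htwo
          exact (mul_eq_zero.mp h4).resolve_left (pow_ne_zero _ hJ)
        have hd0 : d = 0 := by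
          have h4 : (α + b)^2 * d = 0 := by
            linear_combination (b)*hC0 + (α)*hB0 + ((α*b*d - α*b*c))*htwo
          exact (mul_eq_zero.mp h4).resolve_left (pow_ne_zero _ hJ)
        exact hA (by rw [hc0, hd0]; ring)
      have hu1 : u ≠ 1 := by
        intro h
        have hv1 : v = 1 := by rw [hv, h, one_pow]
        rw [h, hv1, mul_one, mul_one] at H1
        have h4 : (α + b) * (α + b + α*b) = 0 := by
          linear_combination H1 + ((-b + b^2 - α + α^2))*htwo
        rcases mul_eq_zero.mp h4 with h5 | h5
        · exact hJ h5
        · exact hs h5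
      have S1 : (b + α*(1 + b)^2)*u^2 + (α + b + α*b)^2*u + (b + α*(1 + b)^2) = 0 := by
        have h4 : (α + b)^2 * ((b + α*(1 + b)^2)*u^2 + (α + b + α*b)^2*u + (b + α*(1 + b)^2)) = 0 := by
          linear_combination ((b + α + 2*α*b + α^2*b))*H2 + ((b + b^2*u + α + 2*α*b + 2*α*b*u + α*b^2 + α^2*u))*H1 + ((b^3 - b^3*u*v + b^4*u + 3*α*b^2 - 3*α*b^2*u*v + 2*α*b^3 + 3*α*b^3*u - 2*α*b^3*u*v + α*b^4 + α*b^4*u + 3*α^2*b - 3*α^2*b*u*v + 4*α^2*b^2 + 6*α^2*b^2*u - 4*α^2*b^2*u*v + 2*α^2*b^3 + α^2*b^3*u - α^2*b^3*u*v + α^3 - α^3*u*v + 2*α^3*b + 5*α^3*b*u - 2*α^3*b*u*v + α^3*b^2 + 5*α^3*b^2*u - 2*α^3*b^2*u*v + α^3*b^3*u + α^4*u + α^4*b*u - α^4*b*u*v + α^4*b^2*u))*htwo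
        exact (mul_eq_zero.mp h4).resolve_left (pow_ne_zero _ hJ)
      have hQq : (b + α*(1 + b)^2) ^ 2 ^ i = e + b*(1 + e)^2 := by
        rw [hpush, mul_pow, pow_right_comm (1 + b) 2, hpush, one_pow, ← hb, ← he]
      have hsN : (α + b + α*b) ^ 2 ^ i = b + e + b*e := by
        rw [hpush, hpush, mul_pow, ← hb, ← he]
      have S2 : (e + b*(1 + e)^2)*v^2 + (b + e + b*e)^2*v + (e + b*(1 + e)^2) = 0 := by
        have hS1N : ((b + α*(1 + b)^2)*u^2 + (α + b + α*b)^2*u + (b + α*(1 + b)^2)) ^ 2 ^ i = 0 := by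
          rw [S1]; exact zero_pow hqne
        rw [hpush, hpush, mul_pow, mul_pow, hQq, pow_right_comm u 2, pow_right_comm (α + b + α*b) 2, hsN, ← hv] at hS1N
        exact hS1N
      have T : ((e + b*(1 + e)^2)*(α + b + α*b)^2 - (b + e + b*e)^2*(α + b*(1 + α)^2)) * ((b + α*(1 + b)^2)*u - (α + b)^2) = 0 := by
        linear_combination ((b*e + b^2 + 2*b^2*e + b^2*e^2 + α*e + α*b + 4*α*b*e + α*b*e^2 + 2*α*b^2 + 5*α*b^2*e + 2*α*b^2*e^2 + α*b^3 + 2*α*b^3*e + α*b^3*e^2))*S1 + ((b^2 + 2*α*b + 4*α*b^2 + α^2 + 4*α^2*b + 6*α^2*b^2 + 2*α^3*b + 4*α^3*b^2 + α^4*b^2))*S2 + ((b*e*v + b*e*u + b*e^2 + b^2*v + b^2*u + b^2*e + b^2*e^2*v + b^2*e^2*u + α*e*v + α*e*u + α*e^2 + α*b*v + α*b*u + α*b*e^2*v + α*b*e^2*u + α*b^2 + α*b^2*e*u + α*b^2*e^2 + α*b^3*u + α*b^3*e^2*u + α^2*e + α^2*b + α^2*b*e*v + α^2*b^2*v + α^2*b^2*e^2*v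 + α^2*b^3 + α^2*b^3*e^2))*H1 + (((-b^2*e - b^2*e*v^2 - b^2*e*u*v - b^2*e*u^2 - b^2*e^2*v - b^2*e^2*u - b^3 - b^3*v^2 - b^3*u*v - b^3*u^2 - 2*b^3*e - b^3*e*v - b^3*e*v^2 - b^3*e*u - b^3*e*u^2 - b^3*e^2*v - b^3*e^2*v^2 - b^3*e^2*u - b^3*e^2*u*v - b^3*e^2*u^2 + b^4*e - b^4*e*v - b^4*e*u + b^4*e^2 - 2*α*b*e - 2*α*b*e*v^2 - 2*α*b*e*u*v - 2*α*b*e*u^2 - 2*α*b*e^2*v - 2*α*b*e^2*u - 2*α*b^2 - 2*α*b^2*v^2 - 2*α*b^2*u*v - 2*α*b^2*u^2 - 8*α*b^2*e - α*b^2*e*v - 5*α*b^2*e*v^2 - α*b^2*e*u - 2*α*b^2*e*u*v - 5*α*b^2*e*u^2 + α*b^2*e^2 - 5*α*b^2*e^2*v - 2*α*b^2*e^2*v^2 - 5*α*b^2*e^2*u - 2*α*b^2*e^2*u*v - 2*α*b^2*e^2*u^2 - 4*α*b^3 - 3*α*b^3*v^2 - 2*α*b^3*u*v - 3*α*b^3*u^2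 - 7*α*b^3*e - 7*α*b^3*e*v - 4*α*b^3*e*v^2 - 7*α*b^3*e*u - α*b^3*e*u*v - 6*α*b^3*e*u^2 - 4*α*b^3*e^2*v - 3*α*b^3*e^2*v^2 - 5*α*b^3*e^2*u - 2*α*b^3*e^2*u*v - 3*α*b^3*e^2*u^2 - α*b^4 - 2*α*b^4*v - 2*α*b^4*u - α*b^4*u*v - 2*α*b^4*u^2 - 2*α*b^4*e - 4*α*b^4*e*v - 5*α*b^4*e*u - 2*α*b^4*e*u^2 + α*b^4*e^2 - 2*α*b^4*e^2*v - 3*α*b^4*e^2*u - α*b^4*e^2*u*v - 2*α*b^4*e^2*u^2 - α*b^5*e*u - α^2*e - α^2*e*v^2 - α^2*e*u*v - α^2*e*u^2 - α^2*e^2*v - α^2*e^2*u - α^2*b - α^2*b*v^2 - α^2*b*u*v - α^2*b*u^2 - 6*α^2*b*e - 4*α^2*b*e*v^2 - 2*α^2*b*e*u*v - 4*α^2*b*e*u^2 + 2*α^2*b*e^2 - 4*α^2*b*e^2*v - α^2*b*e^2*v^2 - 4*α^2*b*e^2*u - α^2*b*e^2*u*v - α^2*b*e^2*u^2 - 4*α^2*b^2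 - 3*α^2*b^2*v^2 - 2*α^2*b^2*u*v - 3*α^2*b^2*u^2 - 13*α^2*b^2*e - 5*α^2*b^2*e*v - 8*α^2*b^2*e*v^2 - 5*α^2*b^2*e*u - 2*α^2*b^2*e*u*v - 8*α^2*b^2*e*u^2 + α^2*b^2*e^2 - 7*α^2*b^2*e^2*v - 3*α^2*b^2*e^2*v^2 - 7*α^2*b^2*e^2*u - 2*α^2*b^2*e^2*u*v - 3*α^2*b^2*e^2*u^2 - 6*α^2*b^3 - 3*α^2*b^3*v - 4*α^2*b^3*v^2 - 3*α^2*b^3*u - 2*α^2*b^3*u*v - 4*α^2*b^3*u^2 - 16*α^2*b^3*e - 10*α^2*b^3*e*v - 6*α^2*b^3*e*v^2 - 9*α^2*b^3*e*u - α^2*b^3*e*u*v - 9*α^2*b^3*e*u^2 - 2*α^2*b^3*e^2 - 9*α^2*b^3*e^2*v - 4*α^2*b^3*e^2*v^2 - 10*α^2*b^3*e^2*u - 2*α^2*b^3*e^2*u*v - 4*α^2*b^3*e^2*u^2 - 3*α^2*b^4 - 3*α^2*b^4*v - 3*α^2*b^4*u - α^2*b^4*u*v - 3*α^2*b^4*u^2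 - 6*α^2*b^4*e - 6*α^2*b^4*e*v - 8*α^2*b^4*e*u - 5*α^2*b^4*e*u^2 - 2*α^2*b^4*e^2 - 3*α^2*b^4*e^2*v - 5*α^2*b^4*e^2*u - α^2*b^4*e^2*u*v - 3*α^2*b^4*e^2*u^2 - α^2*b^5*u - α^2*b^5*u^2 - α^2*b^5*e - 2*α^2*b^5*e*u - α^2*b^5*e*u^2 - α^2*b^5*e^2*u - α^2*b^5*e^2*u^2 + α^3*e^2 - α^3*b*e - α^3*b*e*v - 2*α^3*b*e*v^2 - α^3*b*e*u - α^3*b*e*u*v + 2*α^3*b*e^2 - α^3*b*e^2*v - α^3*b^2 - α^3*b^2*v - 2*α^3*b^2*v^2 - α^3*b^2*u - α^3*b^2*u*v - 8*α^3*b^2*e - α^3*b^2*e*v - 5*α^3*b^2*e*v^2 - α^3*b^2*e*u - α^3*b^2*e*u*v + α^3*b^2*e^2 - 4*α^3*b^2*e^2*v - 2*α^3*b^2*e^2*v^2 - 2*α^3*b^2*e^2*u - α^3*b^2*e^2*u*v - 4*α^3*b^3 - α^3*b^3*v - 3*α^3*b^3*v^2 - α^3*b^3*u - α^3*b^3*u*v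 - 7*α^3*b^3*e - 6*α^3*b^3*e*v - 4*α^3*b^3*e*v^2 - 3*α^3*b^3*e*u - α^3*b^3*e*u*v - 2*α^3*b^3*e^2 - 5*α^3*b^3*e^2*v - 3*α^3*b^3*e^2*v^2 - 3*α^3*b^3*e^2*u - α^3*b^3*e^2*u*v + α^3*b^4 - 3*α^3*b^4*v - 2*α^3*b^4*u - α^3*b^4*u*v - 4*α^3*b^4*e*v - 3*α^3*b^4*e*u + α^3*b^4*e^2 - 3*α^3*b^4*e^2*v - 3*α^3*b^4*e^2*u - α^3*b^4*e^2*u*v - α^3*b^5*u - α^3*b^5*e*u - α^3*b^5*e^2*u - 2*α^4*b*e - α^4*b^2 - 2*α^4*b^2*e - α^4*b^2*e*v^2 - α^4*b^3*v^2 - α^4*b^3*e - α^4*b^3*e*v - α^4*b^3*e*v^2 - α^4*b^3*e^2*v - α^4*b^3*e^2*v^2 - α^4*b^4*v - α^4*b^4*e*v - α^4*b^4*e^2*v)))*htwo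
      rcases mul_eq_zero.mp T with hE | hQu
      · have hE' : (e + b*(1 + e)^2)*(α + b + α*b)^2 = (b + e + b*e)^2*(α + b*(1 + α)^2) := sub_eq_zero.mp hE
        have hfac : (e - α) * ((b + α*(1 + b)^2)*e - b*(α + b)) = 0 := by
          linear_combination hE' + ((b*e^2 + b^2*e^2 + α*e^2 - α*b*e + 3*α*b*e^2 + 2*α*b^2*e^2 - α^2*e - 3*α^2*b*e - α^2*b^2 - 2*α^2*b^2*e))*htwo
        rcases mul_eq_zero.mp hfac with h5 | h6
        · exact hea (sub_eq_zero.mp h5)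
        · have hQe : (b + α*(1 + b)^2)*e = b*(α + b) := sub_eq_zero.mp h6
          have hg : (α + b)*(b + e) = α*b^2*e := by
            linear_combination hQe + ((b^2 + α*b - α*b*e - α*b^2*e))*htwo
          have hgq : ((α + b)/(α*b)) ^ 2 ^ i = (b + e)/(b*e) := by
            rw [div_pow, hpush, mul_pow, ← hb, ← he]
          have hgne : (α + b)/(α*b) ≠ 0 := div_ne_zero hJ (mul_ne_zero hα0 hb0)
          have hgg : ((α + b)/(α*b)) * ((b + e)/(b*e)) = 1 := by
            rw [div_mul_div_comm, div_eq_one_iff_eq (mul_ne_zero (mul_ne_zero hα0 hb0) (mul_ne_zero hb0 he0))]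
            linear_combination hg
          have hginv : (b + e)/(b*e) = ((α + b)/(α*b))⁻¹ := eq_inv_of_mul_eq_one_right hgg
          have hfix2 : ((α + b)/(α*b)) ^ 2 ^ (i + i) = (α + b)/(α*b) := by
            calc ((α + b)/(α*b)) ^ 2 ^ (i + i) = (((α + b)/(α*b)) ^ 2 ^ i) ^ 2 ^ i := by
                  rw [pow_add, pow_mul]
              _ = ((b + e)/(b*e)) ^ 2 ^ i := by rw [hgq]
              _ = (((α + b)/(α*b))⁻¹) ^ 2 ^ i := by rw [hginv]
              _ = (((α + b)/(α*b)) ^ 2 ^ i)⁻¹ := by rw [inv_pow]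
              _ = ((b + e)/(b*e))⁻¹ := by rw [hgq]
              _ = (α + b)/(α*b) := by rw [hginv, inv_inv]
          rcases galois_pow_fix k (i + i) hkpos hcop2 _ hfix2 with h7 | h7
          · exact hgne h7
          · have h8 : α + b = α*b := (div_eq_one_iff_eq (mul_ne_zero hα0 hb0)).mp h7
            exact hs (by linear_combination h8 + α*b*htwo)
      · have hQu' : (b + α*(1 + b)^2)*u = (α + b)^2 := sub_eq_zero.mp hQu
        have hsq9 : ((α + b)^2 + (α + b + α*b)*(α + b) + (b + α*(1 + b)^2))^2 = 0 := by
          linear_combination ((b + α + 2*α*b + α*b^2))*S1 + ((b*u + α*u + α*b^2*u + α^2*b^2))*hQu' + ((-b^2*u^2 + 2*b^3 + 2*b^4 - 2*α*b*u^2 + 6*α*b^2 - 3*α*b^2*u^2 + 13*α*b^3 - 2*α*b^3*u - 2*α*b^3*u^2 + 4*α*b^4 - α^2*u^2 + 6*α^2*b - 3*α^2*b*u^2 + 22*α^2*b^2 - 4*α^2*b^2*u - 4*α^2*b^2*u^2 + 12*α^2*b^3 - 3*α^2*b^3*u - 3*α^2*b^3*u^2 + 2*α^2*b^4 - α^2*b^4*u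 - α^2*b^4*u^2 + 2*α^3 + 13*α^3*b - 2*α^3*b*u + 10*α^3*b^2 - 3*α^3*b^2*u + 3*α^3*b^3 - 3*α^3*b^3*u - α^3*b^4*u + 2*α^4 + 2*α^4*b + α^4*b^2))*htwo
        have hX : (α + b)^2 + (α + b + α*b)*(α + b) + (b + α*(1 + b)^2) = 0 :=
          (pow_eq_zero_iff (by norm_num : (2:ℕ) ≠ 0)).mp hsq9
        have hP0 : α + b*(1 + α)^2 = 0 := by
          linear_combination hX + ((-b^2 - 2*α*b - α*b^2 - α^2))*htwo
        have hv0 : v ≠ 0 := by rw [hv]; exact pow_ne_zero _ hu0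
        have hKey : v * ((α + b)^2*u - (b + α*(1 + b)^2)) = 0 := by
          linear_combination H2 + (u)*hP0
        have hJu : (α + b)^2*u = b + α*(1 + b)^2 :=
          sub_eq_zero.mp ((mul_eq_zero.mp hKey).resolve_left hv0)
        have huu : (u - 1)^2*(α + b)^2 = 0 := by
          linear_combination (u)*hJu + hQu' + ((b^2 - b^2*u + 2*α*b - 2*α*b*u + α^2 - α^2*u))*htwo
        have hu1' : u - 1 = 0 :=
          (pow_eq_zero_iff (by norm_num : (2:ℕ) ≠ 0)).mp ((mul_eq_zero.mp huu).resolve_right (pow_ne_zero _ hJ))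
        exact hu1 (by linear_combination hu1')
  · rintro ⟨hA, hB⟩
    refine ⟨?_, ?_, ?_⟩
    · rw [hA, hB]; simp [hqne]
    · rw [hA, hB]; simp [hqne]
    · rw [hA, hB]; simp [hqne]
end

section
/- Let k be an odd positive integer, i a positive integer with gcd(i,k) = 1, F = GaloisField 2 k, and α ∈ F with α ≠ 0 and α ≠ 1. Then for any (c,d) ∈ F × F with (c,d) ≠ (0,0), the number of pairs (u,v) ∈ F × F satisfying the system: (1) (α^(2^i+1)·c + c + d)^(2^i)·u^(2^(2i)) + (α^(2^i+1)·c + c + d)·u + (α·c + α^(2^i)·d)^(2^i)·v^(2^(2i)) + (α^(2^i)·c + α·d)·v = 0 and (2) (α^(2^i)·c + α·d)^(2^i)·u^(2^(2i)) + (α·c + α^(2^i)·d)·u + (α^(2^i+1)·d + c + d)^(2^i)·v^(2^(2i)) + (α^(2^i+1)·d + c + d)·v = 0 is at most 4. -/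
private lemma pow_pow_gcd_aux {M : Type*} [Monoid M] (x : M) :
    ∀ m n : ℕ, x ^ 2 ^ m = x → x ^ 2 ^ n = x → x ^ 2 ^ Nat.gcd m n = x := by
  intro m n
  induction m, n using Nat.gcd.induction with
  | H0 n => intro _ hn; simpa using hn
  | H1 m n hm ih =>
    intro hxm hxn
    rw [Nat.gcd_rec]
    refine ih ?_ hxm
    have hq : ∀ t : ℕ, x ^ 2 ^ (m * t) = x := by
      intro t
      induction t with
      | zero => simp
      | succ t iht =>
        have h : 2 ^ (m * (t + 1)) = 2 ^ (m * t) * 2 ^ m := by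
          rw [Nat.mul_succ, pow_add]
        rw [h, pow_mul, iht, hxm]
    calc x ^ 2 ^ (n % m) = (x ^ 2 ^ (m * (n / m))) ^ 2 ^ (n % m) := by rw [hq]
      _ = x ^ (2 ^ (m * (n / m)) * 2 ^ (n % m)) := (pow_mul x _ _).symm
      _ = x ^ 2 ^ (m * (n / m) + n % m) := by rw [pow_add]
      _ = x ^ 2 ^ n := by rw [Nat.div_add_mod]
      _ = x := hxn

set_option maxHeartbeats 1600000 in
private theorem butterfly_aux {F : Type*} [Field F] [Fintype F] [CharP F 2]
    (k i : ℕ) (hk : Odd k) (hkpos : 0 < k)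
    (hipos : 0 < i) (hgcd : Nat.gcd i k = 1) (hcard : Fintype.card F = 2 ^ k)
    (α : F) (hα0 : α ≠ 0) (hα1 : α ≠ 1)
    (c d : F) (hcd : (c, d) ≠ (0, 0)) :
    Set.ncard {p : F × F |
      (α ^ (2 ^ i + 1) * c + c + d) ^ 2 ^ i * p.1 ^ 2 ^ (2 * i)
          + (α ^ (2 ^ i + 1) * c + c + d) * p.1
          + (α * c + α ^ 2 ^ i * d) ^ 2 ^ i * p.2 ^ 2 ^ (2 * i)
          + (α ^ 2 ^ i * c + α * d) * p.2 = 0 ∧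
      (α ^ 2 ^ i * c + α * d) ^ 2 ^ i * p.1 ^ 2 ^ (2 * i)
          + (α * c + α ^ 2 ^ i * d) * p.1
          + (α ^ (2 ^ i + 1) * d + c + d) ^ 2 ^ i * p.2 ^ 2 ^ (2 * i)
          + (α ^ (2 ^ i + 1) * d + c + d) * p.2 = 0} ≤ 4 := by
  have h2ine : (2 : ℕ) ^ i ≠ 0 := by positivity
  have h2F : (2 : F) = 0 := CharTwo.two_eq_zero
  have hadd0 : ∀ x y : F, x + y = 0 → x = y := by
    intro x y h; rw [← CharTwo.sub_eq_add] at h; exact sub_eq_zero.mp h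
  have hφadd : ∀ x y : F, (x + y) ^ 2 ^ i = x ^ 2 ^ i + y ^ 2 ^ i := fun x y =>
    add_pow_char_pow ..
  have hφinj : ∀ x y : F, x ^ 2 ^ i = y ^ 2 ^ i → x = y := by
    intro x y h
    have h0 : (x - y) ^ 2 ^ i = 0 := by rw [sub_pow_char_pow, h, sub_self]
    exact sub_eq_zero.mp ((pow_eq_zero_iff h2ine).mp h0)
  have hφφ : ∀ x : F, x ^ 2 ^ (2 * i) = (x ^ 2 ^ i) ^ 2 ^ i := by
    intro x; rw [two_mul, pow_add, pow_mul]
  have hcardpow : ∀ x : F, x ^ 2 ^ k = x := by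
    intro x
    rw [← hcard]; exact FiniteField.pow_card x
  have hsq01 : ∀ x : F, x ^ 2 ^ 1 = x → x = 0 ∨ x = 1 := by
    intro x h
    have h2 : x * (x - 1) = 0 := by norm_num at h; linear_combination h
    rcases mul_eq_zero.mp h2 with h | h
    · exact Or.inl h
    · exact Or.inr (sub_eq_zero.mp h)
  have hfrobi : ∀ x : F, x ^ 2 ^ i = x → x = 0 ∨ x = 1 := by
    intro x h
    have := pow_pow_gcd_aux x i k h (hcardpow x)
    rw [hgcd] at this
    exact hsq01 x this
  have hgcd2 : Nat.gcd (2 * i) k = 1 :=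
    Nat.Coprime.mul (hk.coprime_two_left) hgcd
  have hfrob2i : ∀ x : F, (x ^ 2 ^ i) ^ 2 ^ i = x → x = 0 ∨ x = 1 := by
    intro x h
    rw [← hφφ] at h
    have := pow_pow_gcd_aux x (2 * i) k h (hcardpow x)
    rw [hgcd2] at this
    exact hsq01 x this
  have hpow1 : ∀ x : F, x ^ 2 ^ i * x = 1 → x = 1 := by
    intro x h
    have hx0 : x ≠ 0 := by rintro rfl; rw [mul_zero] at h; exact one_ne_zero h.symm
    have hinv : x ^ 2 ^ i = x⁻¹ := eq_inv_of_mul_eq_one_left h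
    have hxx : (x ^ 2 ^ i) ^ 2 ^ i = x := by rw [hinv, inv_pow, hinv, inv_inv]
    rcases hfrob2i x hxx with h0 | h1
    · exact absurd h0 hx0
    · exact h1
  
  -- abstract the field constants
  obtain ⟨a1, ha1⟩ : ∃ t : F, α ^ 2 ^ i = t := ⟨_, rfl⟩
  rw [ha1]
  obtain ⟨a2, ha2⟩ : ∃ t : F, a1 ^ 2 ^ i = t := ⟨_, rfl⟩
  obtain ⟨A, hA⟩ : ∃ t : F, α ^ (2 ^ i + 1) * c + c + d = t := ⟨_, rfl⟩
  rw [hA]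
  obtain ⟨B, hB⟩ : ∃ t : F, α * c + a1 * d = t := ⟨_, rfl⟩
  rw [hB]
  obtain ⟨Bp, hBp⟩ : ∃ t : F, a1 * c + α * d = t := ⟨_, rfl⟩
  rw [hBp]
  obtain ⟨D, hD⟩ : ∃ t : F, α ^ (2 ^ i + 1) * d + c + d = t := ⟨_, rfl⟩
  rw [hD]
  set SS : Set (F × F) := {p : F × F |
      A ^ 2 ^ i * p.1 ^ 2 ^ (2 * i) + A * p.1 + B ^ 2 ^ i * p.2 ^ 2 ^ (2 * i) + Bp * p.2 = 0 ∧
      Bp ^ 2 ^ i * p.1 ^ 2 ^ (2 * i) + B * p.1 + D ^ 2 ^ i * p.2 ^ 2 ^ (2 * i) + D * p.2 = 0}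
    with hSSdef
  have hmem : ∀ w : F × F, w ∈ SS ↔
      (A ^ 2 ^ i * (w.1 ^ 2 ^ i) ^ 2 ^ i + A * w.1
        + B ^ 2 ^ i * (w.2 ^ 2 ^ i) ^ 2 ^ i + Bp * w.2 = 0 ∧
       Bp ^ 2 ^ i * (w.1 ^ 2 ^ i) ^ 2 ^ i + B * w.1
        + D ^ 2 ^ i * (w.2 ^ 2 ^ i) ^ 2 ^ i + D * w.2 = 0) := by
    intro w
    rw [hSSdef]
    simp only [Set.mem_setOf_eq, hφφ]
  clear_value SS
  have hsub4 : ∀ (T : Set (F × F)) (p0 p1 p2 p3 : F × F), T ⊆ {p0, p1, p2, p3} → T.ncard ≤ 4 := by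
    intro T p0 p1 p2 p3 hsub
    refine le_trans (Set.ncard_le_ncard hsub (Set.toFinite _)) ?_
    refine le_trans (Set.ncard_insert_le _ _) ?_
    have h1 : ({p1, p2, p3} : Set (F × F)).ncard ≤ 3 := by
      refine le_trans (Set.ncard_insert_le _ _) ?_
      have h2 : ({p2, p3} : Set (F × F)).ncard ≤ 2 := by
        refine le_trans (Set.ncard_insert_le _ _) ?_
        simp [Set.ncard_singleton]
      omega
    omega
  have hsub1 : ∀ T : Set (F × F), (∀ w ∈ T, w = ((0 : F), (0 : F))) → T.ncard ≤ 4 := by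
    intro T h
    refine hsub4 T (0, 0) (0, 0) (0, 0) (0, 0) ?_
    intro w hw
    rw [h w hw]
    simp
  by_cases hdet : A * D - B * Bp = 0
  · -- degenerate case
    have hADBB : A * D = B * Bp := sub_eq_zero.mp hdet
    have ha1ne : a1 ≠ 0 := by rw [← ha1]; exact pow_ne_zero _ hα0
    have ha2ne : a2 ≠ 0 := by rw [← ha2]; exact pow_ne_zero _ ha1ne
    have hαa1 : α + a1 ≠ 0 := by
      intro h
      have h' := hadd0 α a1 h
      have h2 : α ^ 2 ^ i = α := by rw [ha1, ← h']
      rcases hfrobi α h2 with h0 | h0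
      · exact hα0 h0
      · exact hα1 h0
    have hβne : α * a1 + α + a1 ≠ 0 := by
      intro h
      have h11 : (1 + α) * (1 + a1) = 1 := by linear_combination h
      have hs : (1 + α) ^ 2 ^ i * (1 + α) = 1 := by
        rw [hφadd, one_pow, ha1]
        linear_combination h11
      have h1α := hpow1 _ hs
      exact hα0 (by linear_combination h1α)
    have hBBp : ¬(B = 0 ∧ Bp = 0) := by
      rintro ⟨hB0, hBp0⟩
      have hB0' : α * c + a1 * d = 0 := by rw [hB]; exact hB0
      have hBp0' : a1 * c + α * d = 0 := by rw [hBp]; exact hBp0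
      have hsum : (α + a1) * (c + d) = 0 := by linear_combination hB0' + hBp0'
      rcases mul_eq_zero.mp hsum with h | h
      · exact hαa1 h
      · have hcd2 : c = d := hadd0 c d h
        rw [← hcd2] at hB0'
        have hc0 : (α + a1) * c = 0 := by linear_combination hB0'
        have hc : c = 0 := (mul_eq_zero.mp hc0).resolve_left hαa1
        have hd : d = 0 := by rw [← hcd2, hc]
        exact hcd (by rw [hc, hd])
    by_cases hA0 : A = 0
    · have hBBp0 : B * Bp = 0 := by rw [← hADBB, hA0, zero_mul]
      rcases mul_eq_zero.mp hBBp0 with hB0 | hBp0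
      · have hBpne : Bp ≠ 0 := fun h => hBBp ⟨hB0, h⟩
        refine hsub1 SS ?_
        intro w hw
        obtain ⟨h1, h2⟩ := (hmem w).mp hw
        rw [hA0, hB0] at h1
        simp only [zero_pow h2ine, zero_mul, mul_zero, add_zero, zero_add] at h1
        have hw2 : w.2 = 0 := (mul_eq_zero.mp h1).resolve_left hBpne
        rw [hB0, hw2] at h2
        simp only [zero_pow h2ine, zero_mul, mul_zero, add_zero, zero_add] at h2
        have hw1 : w.1 = 0 := by
          rcases mul_eq_zero.mp h2 with h | h
          · exact absurd h (pow_ne_zero _ hBpne)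
          · exact (pow_eq_zero_iff h2ine).mp ((pow_eq_zero_iff h2ine).mp h)
        exact Prod.ext_iff.mpr ⟨hw1, hw2⟩
      · have hBne : B ≠ 0 := fun h => hBBp ⟨h, hBp0⟩
        refine hsub1 SS ?_
        intro w hw
        obtain ⟨h1, h2⟩ := (hmem w).mp hw
        rw [hA0, hBp0] at h1
        simp only [zero_pow h2ine, zero_mul, mul_zero, add_zero, zero_add] at h1
        have hw2 : w.2 = 0 := by
          rcases mul_eq_zero.mp h1 with h | h
          · exact absurd h (pow_ne_zero _ hBne)
          · exact (pow_eq_zero_iff h2ine).mp ((pow_eq_zero_iff h2ine).mp h)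
        rw [hBp0, hw2] at h2
        simp only [zero_pow h2ine, zero_mul, mul_zero, add_zero, zero_add] at h2
        have hw1 : w.1 = 0 := (mul_eq_zero.mp h2).resolve_left hBne
        exact Prod.ext_iff.mpr ⟨hw1, hw2⟩
    · by_cases hD0 : D = 0
      · have hBBp0 : B * Bp = 0 := by rw [← hADBB, hD0, mul_zero]
        rcases mul_eq_zero.mp hBBp0 with hB0 | hBp0
        · have hBpne : Bp ≠ 0 := fun h => hBBp ⟨hB0, h⟩
          refine hsub1 SS ?_
          intro w hw
          obtain ⟨h1, h2⟩ := (hmem w).mp hw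
          rw [hB0, hD0] at h2
          simp only [zero_pow h2ine, zero_mul, mul_zero, add_zero, zero_add] at h2
          have hw1 : w.1 = 0 := by
            rcases mul_eq_zero.mp h2 with h | h
            · exact absurd h (pow_ne_zero _ hBpne)
            · exact (pow_eq_zero_iff h2ine).mp ((pow_eq_zero_iff h2ine).mp h)
          rw [hB0, hw1] at h1
          simp only [zero_pow h2ine, zero_mul, mul_zero, add_zero, zero_add] at h1
          have hw2 : w.2 = 0 := (mul_eq_zero.mp h1).resolve_left hBpne
          exact Prod.ext_iff.mpr ⟨hw1, hw2⟩
        · have hBne : B ≠ 0 := fun h => hBBp ⟨h, hBp0⟩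
          refine hsub1 SS ?_
          intro w hw
          obtain ⟨h1, h2⟩ := (hmem w).mp hw
          rw [hBp0, hD0] at h2
          simp only [zero_pow h2ine, zero_mul, mul_zero, add_zero, zero_add] at h2
          have hw1 : w.1 = 0 := (mul_eq_zero.mp h2).resolve_left hBne
          rw [hBp0, hw1] at h1
          simp only [zero_pow h2ine, zero_mul, mul_zero, add_zero, zero_add] at h1
          have hw2 : w.2 = 0 := by
            rcases mul_eq_zero.mp h1 with h | h
            · exact absurd h (pow_ne_zero _ hBne)
            · exact (pow_eq_zero_iff h2ine).mp ((pow_eq_zero_iff h2ine).mp h)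
          exact Prod.ext_iff.mpr ⟨hw1, hw2⟩
      · have hBne : B ≠ 0 := by
          intro h
          rw [h, zero_mul] at hADBB
          rcases mul_eq_zero.mp hADBB with h' | h'
          · exact hA0 h'
          · exact hD0 h'
        have hBpne : Bp ≠ 0 := by
          intro h
          rw [h, mul_zero] at hADBB
          rcases mul_eq_zero.mp hADBB with h' | h'
          · exact hA0 h'
          · exact hD0 h'
        by_cases hE0 : A * Bp ^ 2 ^ i - B * A ^ 2 ^ i = 0
        · exfalso
          set y := B / A with hydef
          set rr := Bp / A with hrrdef
          have hyA : B = y * A := (div_mul_cancel₀ B hA0).symm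
          have hrrA : Bp = rr * A := (div_mul_cancel₀ Bp hA0).symm
          have hyne : y ≠ 0 := div_ne_zero hBne hA0
          have hrrne : rr ≠ 0 := div_ne_zero hBpne hA0
          have hDA : D = y * rr * A := by
            apply mul_left_cancel₀ hA0
            rw [hADBB, hyA, hrrA]; ring
          have hyr : rr ^ 2 ^ i = y := by
            rw [hrrdef, hydef, div_pow, div_eq_div_iff (pow_ne_zero _ hA0) hA0]
            linear_combination hE0
          have hA2 : A = a1 * α * c + c + d := by rw [← hA, pow_succ, ha1]
          have hD2 : D = a1 * α * d + c + d := by rw [← hD, pow_succ, ha1]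
          have hI1 : (α^2*a1 + α + a1) * B + (α*a1^2 + α + a1) * Bp = (α + a1)^2 * A := by
            rw [← hB, ← hBp, hA2]
            linear_combination (α^2*a1^2*d + (-1)*α^2*a1^2*c) * h2F
          have hI2 : (α*a1^2 + α + a1) * B + (α^2*a1 + α + a1) * Bp = (α + a1)^2 * D := by
            rw [← hB, ← hBp, hD2]
            linear_combination ((-1)*α^2*a1^2*d + α^2*a1^2*c) * h2F
          have hR1 : (α^2*a1 + α + a1) * y + (α*a1^2 + α + a1) * rr = (α + a1)^2 := by
            apply mul_right_cancel₀ hA0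
            rw [hyA, hrrA] at hI1
            linear_combination hI1
          have hR2 : (α + a1)^2 * (y * rr) = (α*a1^2 + α + a1) * y + (α^2*a1 + α + a1) * rr := by
            apply mul_right_cancel₀ hA0
            rw [hyA, hrrA, hDA] at hI2
            linear_combination -hI2
          have hg2ne : (α + a1)^2 ≠ 0 := pow_ne_zero _ hαa1
          have hQQg : (α + a1)^2 * ((α*a1^2 + α + a1) * rr^2 + (α*a1 + α + a1)^2 * rr
              + (α*a1^2 + α + a1)) = 0 := by
            linear_combination (α^2*a1 + α + a1) * hR2
              + ((α + a1)^2*rr - (α*a1^2 + α + a1)) * hR1 + (a1^2*rr + a1^2*y + (-1)*a1^3*y*rr + a1^4*rr + 2*α*a1*rr + 2*α*a1*y + (-3)*α*a1^2*y*rr + 5*α*a1^3*rr + α*a1^3*y + α*a1^4*rr + α^2*rr + α^2*y + (-3)*α^2*a1*y*rr + 8*α^2*a1^2*rr + 2*α^2*a1^2*y + 3*α^2*a1^3*rr + (-1)*α^2*a1^3*y*rr + α^2*a1^4*rr + (-1)*α^3*y*rr + 5*α^3*a1*rr + α^3*a1*y + 3*α^3*a1^2*rr + (-2)*α^3*a1^2*y*rr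 + α^3*a1^3*rr + α^3*a1^3*y + α^4*rr + α^4*a1*rr + (-1)*α^4*a1*y*rr + α^4*a1^2*rr) * h2F
          have hQuadQ := (mul_eq_zero.mp hQQg).resolve_left hg2ne
          have hPPg : (α + a1)^2 * ((α^2*a1 + α + a1) * y^2 + (α*a1 + α + a1)^2 * y
              + (α^2*a1 + α + a1)) = 0 := by
            linear_combination (α*a1^2 + α + a1) * hR2
              + ((α + a1)^2*y - (α^2*a1 + α + a1)) * hR1 + (a1^2*rr + a1^2*y + (-1)*a1^3*y*rr + a1^4*y + 2*α*a1*rr + 2*α*a1*y + (-3)*α*a1^2*y*rr + α*a1^3*rr + 5*α*a1^3*y + α*a1^4*y + (-1)*α*a1^4*y*rr + α^2*rr + α^2*y + (-3)*α^2*a1*y*rr + 2*α^2*a1^2*rr + 8*α^2*a1^2*y + 3*α^2*a1^3*y + (-2)*α^2*a1^3*y*rr + α^2*a1^4*y + (-1)*α^3*y*rr + α^3*a1*rr + 5*α^3*a1*y + 3*α^3*a1^2*y + (-1)*α^3*a1^2*y*rr + α^3*a1^3*rr + α^3*a1^3*y + α^4*y + α^4*a1*y + α^4*a1^2*y) * 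h2F
          have hQuadP := (mul_eq_zero.mp hPPg).resolve_left hg2ne
          have hPs : (α^2*a1 + α + a1) ^ 2 ^ i = a1^2*a2 + a1 + a2 := by
            rw [hφadd, hφadd, mul_pow, pow_right_comm, ha1, ha2]
          have hQs : (α*a1^2 + α + a1) ^ 2 ^ i = a1*a2^2 + a1 + a2 := by
            rw [hφadd, hφadd, mul_pow, pow_right_comm a1 2, ha1, ha2]
          have hgs : (α + a1) ^ 2 ^ i = a1 + a2 := by rw [hφadd, ha1, ha2]
          have hR1s : (a1^2*a2 + a1 + a2) * y ^ 2 ^ i + (a1*a2^2 + a1 + a2) * y = (a1 + a2)^2 := by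
            have h' := congrArg (fun t : F => t ^ 2 ^ i) hR1
            rw [hφadd, mul_pow, mul_pow, hPs, hQs, hyr, pow_right_comm, hgs] at h'
            exact h'
          have hR2s : (a1 + a2)^2 * (y ^ 2 ^ i * y)
              = (a1*a2^2 + a1 + a2) * y ^ 2 ^ i + (a1^2*a2 + a1 + a2) * y := by
            have h' := congrArg (fun t : F => t ^ 2 ^ i) hR2
            rw [mul_pow, mul_pow, pow_right_comm, hgs, hyr, hφadd, mul_pow, mul_pow,
              hQs, hPs, hyr] at h'
            exact h'
          have ha1a2 : a1 + a2 ≠ 0 := by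
            intro h
            have h' := hadd0 a1 a2 h
            have hfix : a1 ^ 2 ^ i = a1 := by rw [ha2, ← h']
            rcases hfrobi a1 hfix with h0 | h0
            · exact ha1ne h0
            · have hone : α ^ 2 ^ i = (1 : F) ^ 2 ^ i := by rw [ha1, h0, one_pow]
              exact hα1 (hφinj _ _ hone)
          have hQQφg : (a1 + a2)^2 * ((a1*a2^2 + a1 + a2) * y^2 + (a1*a2 + a1 + a2)^2 * y
              + (a1*a2^2 + a1 + a2)) = 0 := by
            linear_combination (a1^2*a2 + a1 + a2) * hR2s
              + ((a1 + a2)^2*y - (a1*a2^2 + a1 + a2)) * hR1s + (a2^2*y + a2^2*(y ^ 2 ^ i) + (-1)*a2^3*(y ^ 2 ^ i)*y + a2^4*y + 2*a1*a2*y + 2*a1*a2*(y ^ 2 ^ i) + (-3)*a1*a2^2*(y ^ 2 ^ i)*y + 5*a1*a2^3*y + a1*a2^3*(y ^ 2 ^ i) + a1*a2^4*y + a1^2*y + a1^2*(y ^ 2 ^ i) + (-3)*a1^2*a2*(y ^ 2 ^ i)*y + 8*a1^2*a2^2*y + 2*a1^2*a2^2*(y ^ 2 ^ i) + 3*a1^2*a2^3*y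 + (-1)*a1^2*a2^3*(y ^ 2 ^ i)*y + a1^2*a2^4*y + (-1)*a1^3*(y ^ 2 ^ i)*y + 5*a1^3*a2*y + a1^3*a2*(y ^ 2 ^ i) + 3*a1^3*a2^2*y + (-2)*a1^3*a2^2*(y ^ 2 ^ i)*y + a1^3*a2^3*y + a1^3*a2^3*(y ^ 2 ^ i) + a1^4*y + a1^4*a2*y + (-1)*a1^4*a2*(y ^ 2 ^ i)*y + a1^4*a2^2*y) * h2F
          have hQuadQφ := (mul_eq_zero.mp hQQφg).resolve_left (pow_ne_zero _ ha1a2)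
          have hstar0 : y * ((a1*a2^2 + a1 + a2) * (α*a1 + α + a1)^2
              - (α^2*a1 + α + a1) * (a1*a2 + a1 + a2)^2) = 0 := by
            linear_combination (a1*a2^2 + a1 + a2) * hQuadP - (α^2*a1 + α + a1) * hQuadQφ
          have hstar := (mul_eq_zero.mp hstar0).resolve_left hyne
          have hfact : (α + a2) * ((α*a1 + α + a1) * (a1*a2 + a1 + a2) - (α + a2) * a1^2) = 0 := by
            linear_combination hstar + (a1*a2^2 + a1^2*a2 + a1^2*a2^2 + a1^3*a2 + α*a2^2 + α*a1*a2 + 2*α*a1*a2^2 + (-1)*α*a1^3 + (-1)*α*a1^3*a2^2 + (-1)*α^2*a1^2 + α^2*a1^2*a2 + α^2*a1^3*a2) * h2F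
          rcases mul_eq_zero.mp hfact with h | h
          · have h' := hadd0 α a2 h
            have hfix : (α ^ 2 ^ i) ^ 2 ^ i = α := by rw [ha1, ha2, ← h']
            rcases hfrob2i α hfix with h0 | h0
            · exact hα0 h0
            · exact hα1 h0
          · have hgg : (α + a1) * (a1 + a2) = α * a1^2 * a2 := by
              linear_combination h + ((-1)*α*a1*a2 + (-1)*α*a1^2*a2) * h2F
            have hμs : ((α + a1) / (α * a1)) ^ 2 ^ i = (a1 + a2) / (a1 * a2) := by
              rw [div_pow, hgs, mul_pow, ha1, ha2]
            have hμ1 : ((α + a1) / (α * a1)) ^ 2 ^ i * ((α + a1) / (α * a1)) = 1 := by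
              rw [hμs, div_mul_div_comm,
                div_eq_one_iff_eq (mul_ne_zero (mul_ne_zero ha1ne ha2ne) (mul_ne_zero hα0 ha1ne))]
              linear_combination hgg
            have hμeq := hpow1 _ hμ1
            rw [div_eq_one_iff_eq (mul_ne_zero hα0 ha1ne)] at hμeq
            exact hβne (by linear_combination hμeq + (α*a1) * h2F)

        · refine hsub1 SS ?_
          intro w hw
          obtain ⟨h1, h2⟩ := (hmem w).mp hw
          have hφdet : A ^ 2 ^ i * D ^ 2 ^ i - B ^ 2 ^ i * Bp ^ 2 ^ i = 0 := by
            have h' : (A * D) ^ 2 ^ i = (B * Bp) ^ 2 ^ i := by rw [hADBB]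
            rw [mul_pow, mul_pow] at h'
            linear_combination h'
          have step1 : (A * Bp ^ 2 ^ i - B * A ^ 2 ^ i)
              * (A ^ 2 ^ i * (w.1 ^ 2 ^ i) ^ 2 ^ i + B ^ 2 ^ i * (w.2 ^ 2 ^ i) ^ 2 ^ i) = 0 := by
            linear_combination (A * A ^ 2 ^ i) * h2 + (B * A ^ 2 ^ i) * h1
              + (A * (w.2 ^ 2 ^ i) ^ 2 ^ i) * hφdet + (A ^ 2 ^ i * w.2) * hdet
              + ((-1)*B*(A ^ 2 ^ i)*(B ^ 2 ^ i)*((w.2 ^ 2 ^ i) ^ 2 ^ i) + (-1)*B*(A ^ 2 ^ i)^2*((w.1 ^ 2 ^ i) ^ 2 ^ i) + A*(B ^ 2 ^ i)*(Bp ^ 2 ^ i)*((w.2 ^ 2 ^ i) ^ 2 ^ i) + (-1)*A*(A ^ 2 ^ i)*(D ^ 2 ^ i)*((w.2 ^ 2 ^ i) ^ 2 ^ i) + (-1)*A*D*(A ^ 2 ^ i)*w.2 + (-1)*A*B*(A ^ 2 ^ i)*w.1) * h2F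
          have hX : A ^ 2 ^ i * (w.1 ^ 2 ^ i) ^ 2 ^ i + B ^ 2 ^ i * (w.2 ^ 2 ^ i) ^ 2 ^ i = 0 :=
            (mul_eq_zero.mp step1).resolve_left hE0
          have hY : A * w.1 + Bp * w.2 = 0 := by linear_combination h1 - hX
          have hABv : A * w.1 ^ 2 ^ i + B * w.2 ^ 2 ^ i = 0 := by
            apply hφinj
            rw [hφadd, mul_pow, mul_pow, zero_pow h2ine]
            exact hX
          have hYs : A ^ 2 ^ i * w.1 ^ 2 ^ i + Bp ^ 2 ^ i * w.2 ^ 2 ^ i = 0 := by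
            have h' := congrArg (fun t : F => t ^ 2 ^ i) hY
            simp only [hφadd, mul_pow, zero_pow h2ine] at h'
            exact h'
          have hu : (A * Bp ^ 2 ^ i - B * A ^ 2 ^ i) * w.1 ^ 2 ^ i = 0 := by
            linear_combination Bp ^ 2 ^ i * hABv - B * hYs
          have hw1 : w.1 = 0 :=
            (pow_eq_zero_iff h2ine).mp ((mul_eq_zero.mp hu).resolve_left hE0)
          have hw2 : w.2 = 0 := by
            rw [hw1] at hY
            simp only [mul_zero, zero_add] at hY
            exact (mul_eq_zero.mp hY).resolve_left hBpne
          exact Prod.ext_iff.mpr ⟨hw1, hw2⟩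

  · -- nondegenerate case: S has F₂-dimension ≤ 2
    have key1 : ∀ l u v : F, (u, v) ∈ SS → (l * u, l * v) ∈ SS → ¬(u = 0 ∧ v = 0) →
        (l ^ 2 ^ i) ^ 2 ^ i = l := by
      intro l u v hw hlw hw0
      obtain ⟨h1, h2⟩ := (hmem (u, v)).mp hw
      obtain ⟨h3, h4⟩ := (hmem (l * u, l * v)).mp hlw
      simp only [mul_pow] at h1 h2 h3 h4
      by_cases hL : (l ^ 2 ^ i) ^ 2 ^ i - l = 0
      · exact sub_eq_zero.mp hL
      · exfalso
        have hT1 : ((l ^ 2 ^ i) ^ 2 ^ i - l) * (A * u + Bp * v) = 0 := by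
          linear_combination (l ^ 2 ^ i) ^ 2 ^ i * h1 - h3
        have hT2 : ((l ^ 2 ^ i) ^ 2 ^ i - l) * (B * u + D * v) = 0 := by
          linear_combination (l ^ 2 ^ i) ^ 2 ^ i * h2 - h4
        have h5 : A * u + Bp * v = 0 := by
          rcases mul_eq_zero.mp hT1 with h | h
          · exact absurd h hL
          · exact h
        have h6 : B * u + D * v = 0 := by
          rcases mul_eq_zero.mp hT2 with h | h
          · exact absurd h hL
          · exact h
        have hu : (A * D - B * Bp) * u = 0 := by linear_combination D * h5 - Bp * h6
        have hv : (A * D - B * Bp) * v = 0 := by linear_combination A * h6 - B * h5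
        exact hw0 ⟨(mul_eq_zero.mp hu).resolve_left hdet, (mul_eq_zero.mp hv).resolve_left hdet⟩
    have hprop : ∀ u1 u2 w1 w2 : F, ¬(u1 = 0 ∧ u2 = 0) → u1 * w2 - u2 * w1 = 0 →
        ∃ l : F, w1 = l * u1 ∧ w2 = l * u2 := by
      intro u1 u2 w1 w2 h0 hd
      by_cases h : u1 = 0
      · have hu2 : u2 ≠ 0 := fun h2 => h0 ⟨h, h2⟩
        refine ⟨w2 / u2, ?_, (div_mul_cancel₀ w2 hu2).symm⟩
        have : u2 * w1 = 0 := by rw [h] at hd; linear_combination -hd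
        rcases mul_eq_zero.mp this with h2 | h2
        · exact absurd h2 hu2
        · rw [h2, h, mul_zero]
      · refine ⟨w1 / u1, (div_mul_cancel₀ w1 h).symm, ?_⟩
        rw [div_mul_eq_mul_div, eq_div_iff h]
        linear_combination hd
    have key2 : ∀ x1 x2 y1 y2 z1 z2 : F, (x1, x2) ∈ SS → (y1, y2) ∈ SS → (z1, z2) ∈ SS →
        ¬(x1 = 0 ∧ x2 = 0) → ¬(y1 = 0 ∧ y2 = 0) → ¬(y1 = x1 ∧ y2 = x2) →
        (z1 = 0 ∧ z2 = 0) ∨ (z1 = x1 ∧ z2 = x2) ∨ (z1 = y1 ∧ z2 = y2) ∨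
          (z1 = x1 + y1 ∧ z2 = x2 + y2) := by
      intro x1 x2 y1 y2 z1 z2 hxS hyS hzS hx0 hy0 hxy
      have hΔ : x1 * y2 - x2 * y1 ≠ 0 := by
        intro hΔ0
        obtain ⟨l, hl1, hl2⟩ := hprop x1 x2 y1 y2 hx0 hΔ0
        have hyS' : (l * x1, l * x2) ∈ SS := by rw [← hl1, ← hl2]; exact hyS
        rcases hfrob2i l (key1 l x1 x2 hxS hyS' hx0) with h | h
        · rw [h, zero_mul] at hl1 hl2; exact hy0 ⟨hl1, hl2⟩
        · rw [h, one_mul] at hl1 hl2; exact hxy ⟨hl1, hl2⟩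
      obtain ⟨h1, h2⟩ := (hmem (x1, x2)).mp hxS
      obtain ⟨h3, h4⟩ := (hmem (y1, y2)).mp hyS
      have hz1 : z1 = ((z1 * y2 - z2 * y1) / (x1 * y2 - x2 * y1)) * x1
          + ((x1 * z2 - x2 * z1) / (x1 * y2 - x2 * y1)) * y1 := by
        rw [div_mul_eq_mul_div, div_mul_eq_mul_div, ← add_div, eq_div_iff hΔ]
        ring
      have hz2 : z2 = ((z1 * y2 - z2 * y1) / (x1 * y2 - x2 * y1)) * x2
          + ((x1 * z2 - x2 * z1) / (x1 * y2 - x2 * y1)) * y2 := by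
        rw [div_mul_eq_mul_div, div_mul_eq_mul_div, ← add_div, eq_div_iff hΔ]
        ring
      set aa := (z1 * y2 - z2 * y1) / (x1 * y2 - x2 * y1) with haa
      set bb := (x1 * z2 - x2 * z1) / (x1 * y2 - x2 * y1) with hbb
      obtain ⟨h5, h6⟩ := (hmem (z1, z2)).mp hzS
      simp only at h5 h6
      rw [hz1, hz2] at h5 h6
      simp only [hφadd, mul_pow] at h5 h6
      have hK1 : ((aa ^ 2 ^ i) ^ 2 ^ i - aa) * (A * x1 + Bp * x2)
          + ((bb ^ 2 ^ i) ^ 2 ^ i - bb) * (A * y1 + Bp * y2) = 0 := by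
        linear_combination (aa ^ 2 ^ i) ^ 2 ^ i * h1 + (bb ^ 2 ^ i) ^ 2 ^ i * h3 - h5
      have hK2 : ((aa ^ 2 ^ i) ^ 2 ^ i - aa) * (B * x1 + D * x2)
          + ((bb ^ 2 ^ i) ^ 2 ^ i - bb) * (B * y1 + D * y2) = 0 := by
        linear_combination (aa ^ 2 ^ i) ^ 2 ^ i * h2 + (bb ^ 2 ^ i) ^ 2 ^ i * h4 - h6
      by_cases hκ : (aa ^ 2 ^ i) ^ 2 ^ i - aa = 0
      · by_cases hμ : (bb ^ 2 ^ i) ^ 2 ^ i - bb = 0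
        · -- both coefficients are in F₂
          rcases hfrob2i aa (sub_eq_zero.mp hκ) with ha | ha <;>
            rcases hfrob2i bb (sub_eq_zero.mp hμ) with hb | hb
          · left; rw [hz1, hz2, ha, hb]; constructor <;> ring
          · right; right; left; rw [hz1, hz2, ha, hb]; constructor <;> ring
          · right; left; rw [hz1, hz2, ha, hb]; constructor <;> ring
          · right; right; right; rw [hz1, hz2, ha, hb]; constructor <;> ring
        · exfalso
          rw [hκ] at hK1 hK2
          have hy1 : y1 = 0 := by
            have := hK1
            rw [zero_mul, zero_add] at this
            rcases mul_eq_zero.mp this with h | h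
            · exact absurd h hμ
            · -- A*y1 + Bp*y2 = 0 and B*y1 + D*y2 = 0
              have h' := hK2
              rw [zero_mul, zero_add] at h'
              rcases mul_eq_zero.mp h' with h'' | h''
              · exact absurd h'' hμ
              · have hu : (A * D - B * Bp) * y1 = 0 := by linear_combination D * h - Bp * h''
                rcases mul_eq_zero.mp hu with h3 | h3
                · exact absurd h3 hdet
                · exact h3
          have hy2 : y2 = 0 := by
            have := hK1
            rw [zero_mul, zero_add] at this
            rcases mul_eq_zero.mp this with h | h
            · exact absurd h hμ
            · have h' := hK2
              rw [zero_mul, zero_add] at h'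
              rcases mul_eq_zero.mp h' with h'' | h''
              · exact absurd h'' hμ
              · have hu : (A * D - B * Bp) * y2 = 0 := by linear_combination A * h'' - B * h
                rcases mul_eq_zero.mp hu with h3 | h3
                · exact absurd h3 hdet
                · exact h3
          exact hy0 ⟨hy1, hy2⟩
      · exfalso
        -- κ ≠ 0 : x is proportional to y, contradiction
        set κ := (aa ^ 2 ^ i) ^ 2 ^ i - aa with hκdef
        set μ := (bb ^ 2 ^ i) ^ 2 ^ i - bb with hμdef
        have hw1 : (A * D - B * Bp) * (κ * x1 + μ * y1) = 0 := by
          linear_combination D * hK1 - Bp * hK2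
        have hw2 : (A * D - B * Bp) * (κ * x2 + μ * y2) = 0 := by
          linear_combination A * hK2 - B * hK1
        have hc1 : κ * x1 + μ * y1 = 0 := by
          rcases mul_eq_zero.mp hw1 with h | h
          · exact absurd h hdet
          · exact h
        have hc2 : κ * x2 + μ * y2 = 0 := by
          rcases mul_eq_zero.mp hw2 with h | h
          · exact absurd h hdet
          · exact h
        have hx1l : x1 = (-(μ / κ)) * y1 := by
          rw [neg_mul, div_mul_eq_mul_div, ← neg_div, eq_div_iff hκ]
          linear_combination hc1
        have hx2l : x2 = (-(μ / κ)) * y2 := by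
          rw [neg_mul, div_mul_eq_mul_div, ← neg_div, eq_div_iff hκ]
          linear_combination hc2
        have hxS' : ((-(μ / κ)) * y1, (-(μ / κ)) * y2) ∈ SS := by
          rw [← hx1l, ← hx2l]; exact hxS
        rcases hfrob2i _ (key1 (-(μ / κ)) y1 y2 hyS hxS' hy0) with h | h
        · rw [h, zero_mul] at hx1l hx2l; exact hx0 ⟨hx1l, hx2l⟩
        · rw [h, one_mul] at hx1l hx2l
          exact hxy ⟨hx1l.symm, hx2l.symm⟩
    -- wrap-up for case 1
    by_cases hex : ∀ w ∈ SS, w = ((0 : F), (0 : F))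
    · exact hsub1 SS hex
    · push_neg at hex
      obtain ⟨x, hxS, hx0⟩ := hex
      by_cases hex2 : ∀ w ∈ SS, w = ((0 : F), (0 : F)) ∨ w = x
      · refine hsub4 SS (0, 0) x x x ?_
        intro w hw
        rcases hex2 w hw with h | h <;> simp [h]
      · push_neg at hex2
        obtain ⟨y, hyS, hy0, hyx⟩ := hex2
        refine hsub4 SS (0, 0) x y (x + y) ?_
        intro z hzS
        obtain ⟨x1, x2⟩ := x
        obtain ⟨y1, y2⟩ := y
        obtain ⟨z1, z2⟩ := z
        have hx0' : ¬(x1 = 0 ∧ x2 = 0) := by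
          intro ⟨ha, hb⟩; exact hx0 (by rw [ha, hb])
        have hy0' : ¬(y1 = 0 ∧ y2 = 0) := by
          intro ⟨ha, hb⟩; exact hy0 (by rw [ha, hb])
        have hyx' : ¬(y1 = x1 ∧ y2 = x2) := by
          intro ⟨ha, hb⟩; exact hyx (by rw [ha, hb])
        rcases key2 x1 x2 y1 y2 z1 z2 hxS hyS hzS hx0' hy0' hyx' with
          ⟨ha, hb⟩ | ⟨ha, hb⟩ | ⟨ha, hb⟩ | ⟨ha, hb⟩ <;>
          simp [ha, hb, Prod.ext_iff, Set.mem_insert_iff]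

/-- Lemma 3.6: for `k` odd, `gcd(i,k) = 1`, `α ≠ 0, 1` and `(c,d) ≠ (0,0)`, the
linearized system in `(u,v)` has at most 4 solutions. -/
theorem butterfly_radical_at_most_four_solutions (k i : ℕ) (hk : Odd k) (hkpos : 0 < k)
    (hipos : 0 < i) (hgcd : Nat.gcd i k = 1)
    (α : GaloisField 2 k) (hα0 : α ≠ 0) (hα1 : α ≠ 1)
    (c d : GaloisField 2 k) (hcd : (c, d) ≠ (0, 0)) :
    Set.ncard {p : GaloisField 2 k × GaloisField 2 k |
      (α ^ (2 ^ i + 1) * c + c + d) ^ 2 ^ i * p.1 ^ 2 ^ (2 * i)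
          + (α ^ (2 ^ i + 1) * c + c + d) * p.1
          + (α * c + α ^ 2 ^ i * d) ^ 2 ^ i * p.2 ^ 2 ^ (2 * i)
          + (α ^ 2 ^ i * c + α * d) * p.2 = 0 ∧
      (α ^ 2 ^ i * c + α * d) ^ 2 ^ i * p.1 ^ 2 ^ (2 * i)
          + (α * c + α ^ 2 ^ i * d) * p.1
          + (α ^ (2 ^ i + 1) * d + c + d) ^ 2 ^ i * p.2 ^ 2 ^ (2 * i)
          + (α ^ (2 ^ i + 1) * d + c + d) * p.2 = 0} ≤ 4 := by
  haveI : Fintype (GaloisField 2 k) := Fintype.ofFinite _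
  have hcard : Fintype.card (GaloisField 2 k) = 2 ^ k := by
    rw [← Nat.card_eq_fintype_card]
    exact GaloisField.card 2 k hkpos.ne'
  exact butterfly_aux k i hk hkpos hipos hgcd hcard α hα0 hα1 c d hcd
end

section
/- Let k be an odd positive integer, i a positive integer with gcd(i,k) = 1, t a natural number with 0 ≤ t ≤ k−1, e = (2^i + 1)·2^t, and F = GaloisField 2 k. Define V : F × F → F × F by V(x,y) = ((x + y)^e + x^e, (x + y)^e + y^e). Then V is a bijection of F × F. -/
private lemma aux_bez {m k : ℕ} (hm : 0 < m) (hk : 0 < k) (h : Nat.Coprime m k) :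
    ∃ p q : ℕ, m * p = k * q + 1 := by
  rcases eq_or_lt_of_le (show 1 ≤ k from hk) with hk1 | hk1
  · exact ⟨1, m - 1, by rw [← hk1]; omega⟩
  · obtain ⟨p, -, hp⟩ := Nat.exists_mul_mod_eq_one_of_coprime h hk1
    refine ⟨p, m * p / k, ?_⟩
    have := Nat.div_add_mod (m * p) k
    omega

private lemma aux_fix_s11 {F : Type*} [Field F] [Fintype F] {k m : ℕ}
    (hcard : Fintype.card F = 2 ^ k) (hm : 0 < m) (hk : 0 < k) (hmk : Nat.Coprime m k)
    {w : F} (hw : w ^ 2 ^ m = w) : w = 0 ∨ w = 1 := by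
  obtain ⟨p, q, hpq⟩ := aux_bez hm hk hmk
  have h1 : ∀ n : ℕ, w ^ (2 ^ m) ^ n = w := by
    intro n
    induction n with
    | zero => simp
    | succ n ih => rw [pow_succ, pow_mul, ih, hw]
  have h2 : w ^ 2 ^ (m * p) = w := by rw [pow_mul]; exact h1 p
  have h3 : w ^ 2 ^ (k * q) = w := by
    rw [pow_mul, ← hcard]; exact FiniteField.pow_card_pow q w
  have h4 : w ^ 2 = w := by
    have h5 := h2
    rw [hpq, pow_succ, pow_mul, h3] at h5
    exact h5
  have h5 : w * (w - 1) = 0 := by linear_combination h4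
  rcases mul_eq_zero.mp h5 with h | h
  · exact Or.inl h
  · exact Or.inr (sub_eq_zero.mp h)

/-- Theorem 4.1: for `k` odd, `gcd(i,k) = 1` and `e = (2^i+1)·2^t`, the closed butterfly
with trivial coefficient `α = 1`, `V(x,y) = ((x+y)^e + x^e, (x+y)^e + y^e)`, is a
bijection of `GaloisField 2 k × GaloisField 2 k`. -/
theorem closedButterfly_trivial_coeff_bijective (k i t : ℕ) (hk : Odd k) (hkpos : 0 < k)
    (hipos : 0 < i) (hgcd : Nat.gcd i k = 1) (ht : t ≤ k - 1) :
    Function.Bijective (fun p : GaloisField 2 k × GaloisField 2 k =>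
      ((p.1 + p.2) ^ ((2 ^ i + 1) * 2 ^ t) + p.1 ^ ((2 ^ i + 1) * 2 ^ t),
       (p.1 + p.2) ^ ((2 ^ i + 1) * 2 ^ t) + p.2 ^ ((2 ^ i + 1) * 2 ^ t))) := by
  set F := GaloisField 2 k with hF
  have hk0 : k ≠ 0 := hkpos.ne'
  letI : Fintype F := Fintype.ofFinite F
  have hcard : Fintype.card F = 2 ^ k := by
    rw [← Nat.card_eq_fintype_card]; exact GaloisField.card 2 k hk0
  have htwo : (2 : F) = 0 := by
    simpa using CharP.cast_eq_zero F 2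
  have hco2 : Nat.Coprime 2 k := Nat.coprime_two_left.mpr hk
  have hco2i : Nat.Coprime (2 * i) k := Nat.Coprime.mul hco2 hgcd
  -- squaring is injective
  have hsq : ∀ z w : F, z ^ 2 = w ^ 2 → z = w := by
    intro z w h
    have h3 : (z - w) ^ 2 = 0 := by
      linear_combination h + (w ^ 2 - z * w) * htwo
    exact sub_eq_zero.mp ((pow_eq_zero_iff (two_ne_zero)).mp h3)
  -- 2^n-th power is injective
  have hp2inj : ∀ (n : ℕ) (z w : F), z ^ 2 ^ n = w ^ 2 ^ n → z = w := by
    intro n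
    induction n with
    | zero => intro z w h; simpa using h
    | succ n ih =>
      intro z w h
      rw [pow_succ, pow_mul, pow_mul] at h
      exact ih z w (hsq _ _ h)
  -- the Gold power map z ^ (2^i + 1) is injective
  have hginj : ∀ z w : F, z ^ (2 ^ i + 1) = w ^ (2 ^ i + 1) → z = w := by
    intro z w h
    by_cases hw : w = 0
    · subst hw
      rw [zero_pow (by positivity)] at h
      rw [pow_eq_zero_iff (by positivity : 2 ^ i + 1 ≠ 0)] at h
      exact h
    · have hz : z ≠ 0 := by
        intro hz0
        apply hw
        rw [hz0, zero_pow (by positivity : 2 ^ i + 1 ≠ 0)] at h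
        exact (pow_eq_zero_iff (by positivity : 2 ^ i + 1 ≠ 0)).mp h.symm
      have hζ0 : z / w ≠ 0 := div_ne_zero hz hw
      have hζ1 : (z / w) ^ (2 ^ i + 1) = 1 := by
        rw [div_pow, h, div_self (pow_ne_zero _ hw)]
      have hinv : (z / w) ^ 2 ^ i = (z / w)⁻¹ :=
        eq_inv_of_mul_eq_one_left (by rw [← pow_succ]; exact hζ1)
      have hfix : (z / w) ^ 2 ^ (2 * i) = z / w := by
        have e : (2 : ℕ) ^ (2 * i) = 2 ^ i * 2 ^ i := by rw [two_mul, pow_add]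
        rw [e, pow_mul, hinv, inv_pow, hinv, inv_inv]
      rcases aux_fix_s11 hcard (by positivity) hkpos hco2i hfix with h0 | h0
      · exact absurd h0 hζ0
      · exact (div_eq_one_iff_eq hw).mp h0
  -- key Gold expansion
  have key : ∀ z w : F, (z + w) ^ (2 ^ i + 1)
      = z ^ (2 ^ i + 1) + w ^ (2 ^ i + 1) + (z ^ 2 ^ i * w + z * w ^ 2 ^ i) := by
    intro z w
    have hd : (z + w) ^ 2 ^ i = z ^ 2 ^ i + w ^ 2 ^ i := add_pow_char_pow z w 2 i
    rw [pow_succ (z + w), pow_succ z, pow_succ w, hd]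
    ring
  -- reduce to injectivity
  rw [← Finite.injective_iff_bijective]
  rintro ⟨x, y⟩ ⟨u, v⟩ h
  simp only [Prod.mk.injEq] at h
  obtain ⟨h1, h2⟩ := h
  have hred : ∀ z w : F, z ^ ((2 ^ i + 1) * 2 ^ t) + w ^ ((2 ^ i + 1) * 2 ^ t)
      = (z ^ (2 ^ i + 1) + w ^ (2 ^ i + 1)) ^ 2 ^ t := by
    intro z w
    rw [pow_mul, pow_mul, ← add_pow_char_pow]
  rw [hred (x + y) x, hred (u + v) u] at h1
  rw [hred (x + y) y, hred (u + v) v] at h2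
  have hg1 := hp2inj t _ _ h1
  have hg2 := hp2inj t _ _ h2
  by_cases hc : x ^ (2 ^ i + 1) + u ^ (2 ^ i + 1) = 0
  · -- trivial case: c = 0
    have hxu : x ^ (2 ^ i + 1) = u ^ (2 ^ i + 1) := by
      linear_combination hc - u ^ (2 ^ i + 1) * htwo
    have hyv0 : y ^ (2 ^ i + 1) + v ^ (2 ^ i + 1) = 0 := by
      linear_combination hc - hg1 + hg2 + (v ^ (2 ^ i + 1) - u ^ (2 ^ i + 1)) * htwo
    have hyv : y ^ (2 ^ i + 1) = v ^ (2 ^ i + 1) := by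
      linear_combination hyv0 - v ^ (2 ^ i + 1) * htwo
    exact Prod.ext (hginj _ _ hxu) (hginj _ _ hyv)
  · exfalso
    have hc1 : x ^ (2 ^ i + 1) + u ^ (2 ^ i + 1) = y ^ (2 ^ i + 1) + v ^ (2 ^ i + 1) := by
      linear_combination hg1 - hg2 + (u ^ (2 ^ i + 1) - v ^ (2 ^ i + 1)) * htwo
    have hc2 : x ^ (2 ^ i + 1) + u ^ (2 ^ i + 1)
        = (x + y) ^ (2 ^ i + 1) + (u + v) ^ (2 ^ i + 1) := by
      linear_combination hg1 + (u ^ (2 ^ i + 1) - (x + y) ^ (2 ^ i + 1)) * htwo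
    set a := x + u with ha_def
    set b := y + v with hb_def
    have ha0 : a ≠ 0 := by
      intro h0
      apply hc
      have hu : u = x := by linear_combination h0 - x * htwo
      rw [hu]
      linear_combination x ^ (2 ^ i + 1) * htwo
    have hb0 : b ≠ 0 := by
      intro h0
      apply hc
      have hv : v = y := by linear_combination h0 - y * htwo
      rw [hv] at hc1
      linear_combination hc1 + y ^ (2 ^ i + 1) * htwo
    have hab0 : a + b ≠ 0 := by
      intro h0
      apply hc
      have hst : u + v = x + y := by linear_combination h0 - (x + y) * htwo
      rw [hst] at hc2
      linear_combination hc2 + (x + y) ^ (2 ^ i + 1) * htwo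
    have hu : u = x + a := by linear_combination -ha_def - x * htwo
    have hv : v = y + b := by linear_combination -hb_def - y * htwo
    have huv : u + v = (x + y) + (a + b) := by
      linear_combination -ha_def - hb_def - (x + y) * htwo
    have hupow : u ^ (2 ^ i + 1)
        = x ^ (2 ^ i + 1) + a ^ (2 ^ i + 1) + (x ^ 2 ^ i * a + x * a ^ 2 ^ i) := by
      rw [hu]; exact key x a
    have hvpow : v ^ (2 ^ i + 1)
        = y ^ (2 ^ i + 1) + b ^ (2 ^ i + 1) + (y ^ 2 ^ i * b + y * b ^ 2 ^ i) := by
      rw [hv]; exact key y b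
    have huvpow : (u + v) ^ (2 ^ i + 1)
        = (x + y) ^ (2 ^ i + 1) + (a + b) ^ (2 ^ i + 1)
          + ((x + y) ^ 2 ^ i * (a + b) + (x + y) * (a + b) ^ 2 ^ i) := by
      rw [huv]; exact key (x + y) (a + b)
    have hα : x ^ (2 ^ i + 1) + u ^ (2 ^ i + 1)
        = a ^ (2 ^ i + 1) + (a ^ 2 ^ i * x + a * x ^ 2 ^ i) := by
      linear_combination hupow + x ^ (2 ^ i + 1) * htwo
    have hβ : x ^ (2 ^ i + 1) + u ^ (2 ^ i + 1)
        = b ^ (2 ^ i + 1) + (b ^ 2 ^ i * y + b * y ^ 2 ^ i) := by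
      linear_combination hc1 + hvpow + y ^ (2 ^ i + 1) * htwo
    have hG : x ^ (2 ^ i + 1) + u ^ (2 ^ i + 1)
        = (a + b) ^ (2 ^ i + 1) + ((a + b) ^ 2 ^ i * (x + y) + (a + b) * (x + y) ^ 2 ^ i) := by
      linear_combination hc2 + huvpow + (x + y) ^ (2 ^ i + 1) * htwo
    have hABpow : (a + b) ^ 2 ^ i = a ^ 2 ^ i + b ^ 2 ^ i := add_pow_char_pow a b 2 i
    have hXYpow : (x + y) ^ 2 ^ i = x ^ 2 ^ i + y ^ 2 ^ i := add_pow_char_pow x y 2 i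
    have hγ : x ^ (2 ^ i + 1) + u ^ (2 ^ i + 1)
        = (a ^ 2 ^ i + b ^ 2 ^ i) * (a + b)
          + ((a ^ 2 ^ i + b ^ 2 ^ i) * (x + y) + (a + b) * (x ^ 2 ^ i + y ^ 2 ^ i)) := by
      linear_combination hG + ((a + b) + (x + y)) * hABpow + (a + b) * hXYpow
    -- the diamond identity:  λ·z = c·M
    have hdia : (a ^ 2 ^ i * b + a * b ^ 2 ^ i) * (a * y + b * x)
        = (x ^ (2 ^ i + 1) + u ^ (2 ^ i + 1)) * (a * b + a ^ 2 + b ^ 2) := by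
      linear_combination (a * b + b ^ 2) * hα + (a * b + a ^ 2) * hβ + (a * b) * hγ
        + (a ^ 2 ^ i * a ^ 2 * b + a ^ 2 ^ i * a * b ^ 2 + a ^ 2 ^ i * a * b * x
          + a ^ 2 ^ i * a * b * y + a ^ 2 ^ i * b ^ 2 * x + b ^ 2 ^ i * a ^ 2 * b
          + b ^ 2 ^ i * a ^ 2 * y + b ^ 2 ^ i * a * b ^ 2 + b ^ 2 ^ i * a * b * x
          + b ^ 2 ^ i * a * b * y + x ^ 2 ^ i * a ^ 2 * b + x ^ 2 ^ i * a * b ^ 2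
          + y ^ 2 ^ i * a ^ 2 * b + y ^ 2 ^ i * a * b ^ 2
          - a ^ 2 * (x ^ (2 ^ i + 1) + u ^ (2 ^ i + 1))
          - 2 * a * b * (x ^ (2 ^ i + 1) + u ^ (2 ^ i + 1))
          - b ^ 2 * (x ^ (2 ^ i + 1) + u ^ (2 ^ i + 1))) * htwo
    -- the club identity:  Z·ab + z·AB = c·(Aa+Bb)
    have hclub : (a ^ 2 ^ i * y ^ 2 ^ i + b ^ 2 ^ i * x ^ 2 ^ i) * (a * b)
          + (a * y + b * x) * (a ^ 2 ^ i * b ^ 2 ^ i)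
        = (x ^ (2 ^ i + 1) + u ^ (2 ^ i + 1)) * (a ^ 2 ^ i * a + b ^ 2 ^ i * b) := by
      linear_combination (a ^ 2 ^ i * a) * hβ + (b ^ 2 ^ i * b) * hα
        + (a ^ 2 ^ i * b ^ 2 ^ i * a * b + a ^ 2 ^ i * b ^ 2 ^ i * a * y
          + a ^ 2 ^ i * b ^ 2 ^ i * b * x + a ^ 2 ^ i * y ^ 2 ^ i * a * b
          - a ^ 2 ^ i * a * (x ^ (2 ^ i + 1) + u ^ (2 ^ i + 1))
          + b ^ 2 ^ i * x ^ 2 ^ i * a * b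
          - b ^ 2 ^ i * b * (x ^ (2 ^ i + 1) + u ^ (2 ^ i + 1))) * htwo
    -- eliminate: λ·Z·ab = c·Md·ab
    have habZ : ((a ^ 2 ^ i * b + a * b ^ 2 ^ i) * (a ^ 2 ^ i * y ^ 2 ^ i + b ^ 2 ^ i * x ^ 2 ^ i))
          * (a * b)
        = ((x ^ (2 ^ i + 1) + u ^ (2 ^ i + 1))
            * (a ^ 2 ^ i * b ^ 2 ^ i + (a ^ 2 ^ i) ^ 2 + (b ^ 2 ^ i) ^ 2)) * (a * b) := by
      linear_combination (a ^ 2 ^ i * b + a * b ^ 2 ^ i) * hclub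
        + (a ^ 2 ^ i * b ^ 2 ^ i) * hdia
        + (-(a ^ 2 ^ i) ^ 2 * b ^ 2 ^ i * a * b * y - (a ^ 2 ^ i) ^ 2 * b ^ 2 ^ i * b ^ 2 * x
          - a ^ 2 ^ i * (b ^ 2 ^ i) ^ 2 * a ^ 2 * y - a ^ 2 ^ i * (b ^ 2 ^ i) ^ 2 * a * b * x
          + a ^ 2 ^ i * b ^ 2 ^ i * a ^ 2 * (x ^ (2 ^ i + 1) + u ^ (2 ^ i + 1))
          + a ^ 2 ^ i * b ^ 2 ^ i * b ^ 2 * (x ^ (2 ^ i + 1) + u ^ (2 ^ i + 1))) * htwo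
    have h5 : (a ^ 2 ^ i * b + a * b ^ 2 ^ i) * (a ^ 2 ^ i * y ^ 2 ^ i + b ^ 2 ^ i * x ^ 2 ^ i)
        = (x ^ (2 ^ i + 1) + u ^ (2 ^ i + 1))
            * (a ^ 2 ^ i * b ^ 2 ^ i + (a ^ 2 ^ i) ^ 2 + (b ^ 2 ^ i) ^ 2) :=
      mul_right_cancel₀ (mul_ne_zero ha0 hb0) habZ
    -- M ≠ 0
    have hMne : a * b + a ^ 2 + b ^ 2 ≠ 0 := by
      intro h0
      have hρ : (b / a) ^ 2 + b / a + 1 = 0 := by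
        rw [div_pow, div_add_div _ _ (pow_ne_zero 2 ha0) ha0, div_add_one (mul_ne_zero (pow_ne_zero 2 ha0) ha0)]
        rw [div_eq_zero_iff]
        left
        linear_combination a * h0
      have hρ4 : (b / a) ^ 2 ^ 2 = b / a := by
        have e : (2 : ℕ) ^ 2 = 4 := rfl
        rw [e]
        linear_combination ((b / a) ^ 2 - b / a) * hρ
      rcases aux_fix_s11 hcard (by norm_num) hkpos hco2 hρ4 with h0' | h0'
      · exact hb0 ((div_eq_zero_iff.mp h0').resolve_right ha0)
      · have hba : b = a := (div_eq_one_iff_eq ha0).mp h0'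
        apply hab0
        rw [hba]
        linear_combination a * htwo
    -- λ ≠ 0
    have hlne : a ^ 2 ^ i * b + a * b ^ 2 ^ i ≠ 0 := by
      intro h0
      have hρfix : (b / a) ^ 2 ^ i = b / a := by
        rw [div_pow, div_eq_div_iff (pow_ne_zero _ ha0) ha0]
        linear_combination h0 - a ^ 2 ^ i * b * htwo
      rcases aux_fix_s11 hcard hipos hkpos hgcd hρfix with h0' | h0'
      · exact hb0 ((div_eq_zero_iff.mp h0').resolve_right ha0)
      · have hba : b = a := (div_eq_one_iff_eq ha0).mp h0'
        apply hab0
        rw [hba]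
        linear_combination a * htwo
    -- raise diamond to the 2^i-th power
    have hz : (a * y + b * x) ^ 2 ^ i = a ^ 2 ^ i * y ^ 2 ^ i + b ^ 2 ^ i * x ^ 2 ^ i := by
      rw [add_pow_char_pow, mul_pow, mul_pow]
    have hM : (a * b + a ^ 2 + b ^ 2) ^ 2 ^ i
        = a ^ 2 ^ i * b ^ 2 ^ i + (a ^ 2 ^ i) ^ 2 + (b ^ 2 ^ i) ^ 2 := by
      rw [add_pow_char_pow, add_pow_char_pow, mul_pow, pow_right_comm a 2, pow_right_comm b 2]
    have hE1 : (a ^ 2 ^ i * b + a * b ^ 2 ^ i) ^ 2 ^ i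
          * (a ^ 2 ^ i * y ^ 2 ^ i + b ^ 2 ^ i * x ^ 2 ^ i)
        = (x ^ (2 ^ i + 1) + u ^ (2 ^ i + 1)) ^ 2 ^ i
          * (a ^ 2 ^ i * b ^ 2 ^ i + (a ^ 2 ^ i) ^ 2 + (b ^ 2 ^ i) ^ 2) := by
      have := congrArg (· ^ 2 ^ i) hdia
      simp only [mul_pow] at this
      rw [hz, hM] at this
      exact this
    have hMdne : a ^ 2 ^ i * b ^ 2 ^ i + (a ^ 2 ^ i) ^ 2 + (b ^ 2 ^ i) ^ 2 ≠ 0 := by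
      rw [← hM]; exact pow_ne_zero _ hMne
    have h6ab : ((x ^ (2 ^ i + 1) + u ^ (2 ^ i + 1)) ^ 2 ^ i * (a ^ 2 ^ i * b + a * b ^ 2 ^ i))
          * (a ^ 2 ^ i * b ^ 2 ^ i + (a ^ 2 ^ i) ^ 2 + (b ^ 2 ^ i) ^ 2)
        = ((a ^ 2 ^ i * b + a * b ^ 2 ^ i) ^ 2 ^ i * (x ^ (2 ^ i + 1) + u ^ (2 ^ i + 1)))
          * (a ^ 2 ^ i * b ^ 2 ^ i + (a ^ 2 ^ i) ^ 2 + (b ^ 2 ^ i) ^ 2) := by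
      linear_combination ((a ^ 2 ^ i * b + a * b ^ 2 ^ i) ^ 2 ^ i) * h5
        - (a ^ 2 ^ i * b + a * b ^ 2 ^ i) * hE1
    have h6 := mul_right_cancel₀ hMdne h6ab
    -- conclude c = λ
    have hζfix : ((x ^ (2 ^ i + 1) + u ^ (2 ^ i + 1)) / (a ^ 2 ^ i * b + a * b ^ 2 ^ i)) ^ 2 ^ i
        = (x ^ (2 ^ i + 1) + u ^ (2 ^ i + 1)) / (a ^ 2 ^ i * b + a * b ^ 2 ^ i) := by
      rw [div_pow, div_eq_div_iff (pow_ne_zero _ hlne) hlne]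
      linear_combination h6
    have hcl : x ^ (2 ^ i + 1) + u ^ (2 ^ i + 1) = a ^ 2 ^ i * b + a * b ^ 2 ^ i := by
      rcases aux_fix_s11 hcard hipos hkpos hgcd hζfix with h0' | h0'
      · exact absurd ((div_eq_zero_iff.mp h0').resolve_right hlne) hc
      · exact (div_eq_one_iff_eq hlne).mp h0'
    -- final contradiction: w = (x+b)/a satisfies w^(2^i) + w = 1
    have hw1' : (x ^ 2 ^ i + b ^ 2 ^ i) * a + (x + b) * a ^ 2 ^ i = a ^ 2 ^ i * a := by
      linear_combination -hα - hcl
        + ((x ^ (2 ^ i + 1) + u ^ (2 ^ i + 1)) - a ^ 2 ^ i * a) * htwo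
    have hw1 : ((x + b) / a) ^ 2 ^ i + (x + b) / a = 1 := by
      rw [div_pow, div_add_div _ _ (pow_ne_zero _ ha0) ha0,
        div_eq_one_iff_eq (mul_ne_zero (pow_ne_zero _ ha0) ha0)]
      have hxb : (x + b) ^ 2 ^ i = x ^ 2 ^ i + b ^ 2 ^ i := add_pow_char_pow x b 2 i
      linear_combination hw1' + a * hxb
    set w := (x + b) / a with hw_def
    have hwd : w ^ 2 ^ i = w + 1 := by linear_combination hw1 - w * htwo
    have hw2 : w ^ 2 ^ (2 * i) = w := by
      have e : (2 : ℕ) ^ (2 * i) = 2 ^ i * 2 ^ i := by rw [two_mul, pow_add]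
      rw [e, pow_mul, hwd, add_pow_char_pow, one_pow, hwd]
      linear_combination htwo
    rcases aux_fix_s11 hcard (by positivity) hkpos hco2i hw2 with h0' | h0'
    · rw [h0', zero_pow (by positivity : (2:ℕ) ^ i ≠ 0)] at hw1
      simp at hw1
    · rw [h0', one_pow] at hw1
      have : (1 : F) = 0 := by linear_combination hw1
      exact one_ne_zero this
end

section
/- Let k be an odd positive integer, i a positive integer with 1 ≤ i < k and gcd(i,k) = 1, and F = GaloisField 2 k. Then for any (c,d) ∈ F × F with (c,d) ≠ (0,0), the number of pairs (u,v) ∈ F × F satisfying the system: (1) d·u^(2^i) + (d·u)^(2^(k−i)) + (c+d)·v^(2^i) + ((c+d)·v)^(2^(k−i)) = 0 and (2) (c+d)·u^(2^i) + ((c+d)·u)^(2^(k−i)) + c·v^(2^i) + (c·v)^(2^(k−i)) = 0 is exactly 4. -/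
open Polynomial

private lemma pow4_mod3 (s : ℕ) : (4:ℕ) ^ s % 3 = 1 := by
  induction s with
  | zero => rfl
  | succ n ih => rw [pow_succ, Nat.mul_mod, ih]

private lemma odd2k_mod3 (k : ℕ) (hk : Odd k) : (2:ℕ) ^ k % 3 = 2 := by
  obtain ⟨m, rfl⟩ := hk
  have : (2:ℕ) ^ (2 * m + 1) = 4 ^ m * 2 := by rw [pow_add, pow_mul]; norm_num
  rw [this, Nat.mul_mod, pow4_mod3]

private lemma not_three_dvd (k : ℕ) (hk : Odd k) : ¬ (3 ∣ 2 ^ k - 1) := by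
  have h := odd2k_mod3 k hk
  have h1 : 1 ≤ 2 ^ k := Nat.one_le_two_pow
  omega

/-- no root of x^2+x+1 in GF(2^k), k odd -/
private lemma no_root (k : ℕ) (hk : Odd k) (hk0 : k ≠ 0) (x : GaloisField 2 k) :
    x ^ 2 + x + 1 ≠ 0 := by
  intro h
  haveI : Fintype (GaloisField 2 k) := Fintype.ofFinite _
  have htwo : (2 : GaloisField 2 k) = 0 := CharTwo.two_eq_zero
  have hcard : Fintype.card (GaloisField 2 k) = 2 ^ k := by
    rw [← Nat.card_eq_fintype_card]; exact GaloisField.card 2 k hk0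
  have hx0 : x ≠ 0 := by rintro rfl; simp at h
  have hx1 : x ≠ 1 := by
    rintro rfl
    exact one_ne_zero (α := GaloisField 2 k) (by linear_combination h - htwo)
  have hx3 : x ^ 3 = 1 := by linear_combination (x - 1) * h
  have hu : x ^ (2 ^ k - 1) = 1 := by
    rw [← hcard]; exact FiniteField.pow_card_sub_one_eq_one x hx0
  -- order divides gcd(3, 2^k-1) = 1
  have ho3 : orderOf x ∣ 3 := orderOf_dvd_of_pow_eq_one hx3
  have hoN : orderOf x ∣ 2 ^ k - 1 := orderOf_dvd_of_pow_eq_one hu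
  have : orderOf x ∣ Nat.gcd 3 (2 ^ k - 1) := Nat.dvd_gcd ho3 hoN
  have hg : Nat.gcd 3 (2 ^ k - 1) = 1 := by
    have h3 := not_three_dvd k hk
    have hd1 : Nat.gcd 3 (2 ^ k - 1) ∣ 3 := Nat.gcd_dvd_left _ _
    have hd2 : Nat.gcd 3 (2 ^ k - 1) ∣ 2 ^ k - 1 := Nat.gcd_dvd_right _ _
    rcases (Nat.dvd_prime Nat.prime_three).mp hd1 with h | h
    · exact h
    · exact absurd (h ▸ hd2) h3
  rw [hg, Nat.dvd_one, orderOf_eq_one_iff] at this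
  exact hx1 this


private lemma bezout_nat (i k : ℕ) (hik : i < k) (hi : 1 ≤ i) (hgcd : Nat.gcd i k = 1) :
    ∃ a b : ℕ, i * a = 1 + k * b := by
  have hk1 : 1 < k := lt_of_le_of_lt hi hik
  obtain ⟨a, ha⟩ := Nat.exists_mul_mod_eq_one_of_coprime hgcd hk1
  refine ⟨a, i * a / k, ?_⟩
  have := Nat.div_add_mod (i * a) k
  omega

private lemma count_lemma {K : Type*} [Field K] [Fintype K] [CharP K 2]
    (k i : ℕ) (hk : Odd k) (hi : 1 ≤ i) (hik : i < k) (hgcd : Nat.gcd i k = 1)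
    (hcard : Fintype.card K = 2 ^ (2 * k))
    (ω : K) (hω : ω ^ 2 + ω + 1 = 0) (w : K) (hw : w ≠ 0) :
    ∃ z₀ : K, z₀ ≠ 0 ∧ ∀ z : K,
      (w ^ 2 ^ (i * (k + 1)) * z ^ 2 ^ (2 * i) = w * z ↔
        (z = 0 ∨ z = z₀ ∨ z = ω * z₀ ∨ z = ω ^ 2 * z₀)) := by
  classical
  have htwo : (2 : K) = 0 := CharTwo.two_eq_zero
  set Q : ℕ := 2 ^ (2 * i) with hQdef
  set j : ℕ := i * (k + 1) with hjdef
  obtain ⟨m, hm⟩ : ∃ m, k + 1 = 2 * m := ⟨(k+1)/2, by obtain ⟨t, rfl⟩ := hk; omega⟩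
  have hQ4 : Q = 4 ^ i := by rw [hQdef, pow_mul]; norm_num
  have hj4 : (2:ℕ) ^ j = 4 ^ (i * m) := by
    rw [hjdef, hm, show i * (2 * m) = 2 * (i * m) by ring, pow_mul]; norm_num
  have h3Q : (3:ℕ) ∣ Q - 1 := by rw [hQ4]; simpa using Nat.sub_dvd_pow_sub_pow 4 1 i
  have h3j : (3:ℕ) ∣ 2 ^ j - 1 := by rw [hj4]; simpa using Nat.sub_dvd_pow_sub_pow 4 1 (i*m)
  have hQ1 : 1 ≤ Q := Nat.one_le_two_pow
  have hQ3 : Q ≠ 0 := by omega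
  set N : ℕ := Fintype.card Kˣ with hNdef
  have hN : N = 2 ^ (2 * k) - 1 := by rw [hNdef, Fintype.card_units, hcard]
  have hN1 : 1 ≤ 2 ^ (2*k) := Nat.one_le_two_pow
  -- gcd(Q-1, N) divides 3
  set g : ℕ := Nat.gcd (Q - 1) N with hgdef
  have hg3 : g ∣ 3 := by
    obtain ⟨a, b, hab⟩ := bezout_nat i k hik hi hgcd
    have hQg : (2:ℕ) ^ (2*i) ≡ 1 [MOD g] := by
      have : (1:ℕ) ≡ Q [MOD g] := (Nat.modEq_iff_dvd' hQ1).mpr (Nat.gcd_dvd_left _ _)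
      exact this.symm
    have hNg : (2:ℕ) ^ (2*k) ≡ 1 [MOD g] := by
      have : (1:ℕ) ≡ 2 ^ (2*k) [MOD g] := (Nat.modEq_iff_dvd' hN1).mpr (hN ▸ Nat.gcd_dvd_right (Q-1) N)
      exact this.symm
    have h1 : (2:ℕ) ^ (2*(i*a)) ≡ 1 [MOD g] := by
      have := hQg.pow a
      rwa [← pow_mul, one_pow, show 2*i*a = 2*(i*a) by ring] at this
    have h2 : (2:ℕ) ^ (2*(i*a)) = 4 * (2 ^ (2*k)) ^ b := by
      rw [hab, show 2*(1+k*b) = 2 + (2*k)*b by ring, pow_add, pow_mul]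
      norm_num
    have h3 : (4:ℕ) * (2 ^ (2*k)) ^ b ≡ 4 * 1 [MOD g] := by
      have := (hNg.pow b).mul_left 4
      rwa [one_pow] at this
    have h4 : (4:ℕ) ≡ 1 [MOD g] := by
      calc (4:ℕ) = 4 * 1 := by norm_num
      _ ≡ 4 * (2 ^ (2*k)) ^ b [MOD g] := h3.symm
      _ = 2 ^ (2*(i*a)) := h2.symm
      _ ≡ 1 [MOD g] := h1
    exact (Nat.modEq_iff_dvd' (by norm_num)).mp h4.symm
  -- the unit
  set ν : Kˣ := Units.mk0 w hw with hνdef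
  have hνN : ν ^ N = 1 := pow_card_eq_one
  have hνNz : ν ^ (N : ℤ) = 1 := by rw [zpow_natCast, hνN]
  -- existence of z₀
  set A : ℤ := Int.gcdA ((Q - 1 : ℕ) : ℤ) ((N : ℕ) : ℤ) with hAdef
  set B : ℤ := Int.gcdB ((Q - 1 : ℕ) : ℤ) ((N : ℕ) : ℤ) with hBdef
  have hbez : (g : ℤ) = ((Q-1:ℕ):ℤ) * A + ((N:ℕ):ℤ) * B := by
    have := Int.gcd_eq_gcd_ab ((Q - 1 : ℕ) : ℤ) ((N : ℕ) : ℤ)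
    rwa [Int.gcd_natCast_natCast] at this
  set t : ℤ := 1 - 2 ^ j with htdef
  have hgt : (g : ℤ) ∣ t := by
    have h3t : (3 : ℤ) ∣ ((2:ℤ) ^ j - 1) := by
      have := Int.natCast_dvd_natCast.mpr h3j
      rwa [Nat.cast_sub Nat.one_le_two_pow, Nat.cast_pow] at this
    have h3t' : (3 : ℤ) ∣ t := by rw [htdef, ← neg_sub]; exact dvd_neg.mpr h3t
    exact dvd_trans (Int.natCast_dvd_natCast.mpr hg3) h3t'
  set s : ℤ := (t / g) * A with hsdef
  set ζ : Kˣ := ν ^ s with hζdef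
  have hζeq : ν ^ ((2:ℕ) ^ j) * ζ ^ (Q : ℕ) = ν * ζ := by
    have hdiv : (t / g) * (g : ℤ) = t := Int.ediv_mul_cancel hgt
    have hQcast : ((Q - 1 : ℕ) : ℤ) = ((Q:ℕ):ℤ) - 1 := by
      rw [Nat.cast_sub hQ1]; norm_num
    have h1 : s * (((Q:ℕ):ℤ) - 1) = t - (t/g) * (((N:ℕ):ℤ) * B) := by
      calc s * (((Q:ℕ):ℤ) - 1) = (t/g) * (((Q-1:ℕ):ℤ) * A) := by rw [hsdef, hQcast]; ring
      _ = (t/g) * ((g:ℤ) - ((N:ℕ):ℤ) * B) := by rw [hbez]; ring_nf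
      _ = t - (t/g) * (((N:ℕ):ℤ) * B) := by rw [mul_sub, hdiv]
    have hexp : ((2:ℕ)^j : ℤ) + s * ((Q:ℕ):ℤ) = (1 + s) + ((N:ℕ) : ℤ) * (-(t/g) * B) := by
      have h2j : ((2:ℕ)^j : ℤ) = 1 - t := by rw [htdef]; push_cast; ring
      rw [h2j]
      linear_combination h1
    calc ν ^ ((2:ℕ) ^ j) * ζ ^ (Q : ℕ)
        = ν ^ (((2:ℕ) ^ j : ℕ) : ℤ) * ζ ^ ((Q:ℕ) : ℤ) := by rw [zpow_natCast, zpow_natCast]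
      _ = ν ^ (((2:ℕ) ^ j : ℕ) : ℤ) * ν ^ (s * ((Q:ℕ) : ℤ)) := by rw [hζdef, ← zpow_mul]
      _ = ν ^ ((((2:ℕ)^j:ℕ)  : ℤ) + s * ((Q:ℕ):ℤ)) := by rw [zpow_add]
      _ = ν ^ ((1 + s) + ((N:ℕ) : ℤ) * (-(t/g) * B)) := by rw_mod_cast [hexp]
      _ = ν ^ (1 + s) * (ν ^ ((N:ℕ):ℤ)) ^ (-(t/g) * B) := by rw [zpow_add, zpow_mul]
      _ = ν * ζ := by rw [hνNz, one_zpow, mul_one, zpow_add, zpow_one, hζdef]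
  -- pass to field
  set z₀ : K := (ζ : K) with hz₀def
  have hz₀ne : z₀ ≠ 0 := Units.ne_zero ζ
  have hz₀eq : w ^ (2:ℕ) ^ j * z₀ ^ Q = w * z₀ := by
    have := congrArg (Units.val) hζeq
    simpa [hz₀def, hνdef] using this
  -- omega facts
  have hωne : ω ≠ 0 := by rintro rfl; simp at hω
  have hω3 : ω ^ 3 = 1 := by linear_combination (ω - 1) * hω
  have hωne1 : ω ≠ 1 := by
    rintro rfl
    exact one_ne_zero (α := K) (by linear_combination hω - htwo)
  have hω2ne1 : ω ^ 2 ≠ 1 := by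
    intro h
    exact hωne (by linear_combination hω - h - htwo)
  have hω2neω : ω ^ 2 ≠ ω := by
    intro h
    exact one_ne_zero (α := K) (by linear_combination hω - h - ω * htwo)
  have factor : ∀ y : K, (y + 1) * (y + ω) * (y + ω^2) = y^3 + 1 := by
    intro y
    linear_combination (y^2 + ω*y + ω - 1) * hω
  -- Q - 1 = 3 * r
  obtain ⟨r, hr⟩ := h3Q
  have hcube_pow : ∀ y : K, y ^ 3 = 1 → y ^ Q = y := by
    intro y hy
    have : y ^ Q = y ^ (1 + 3 * r) := by rw [← hr]; congr 1; omega
    rw [this, pow_add, pow_mul, hy, one_pow, mul_one, pow_one]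
  refine ⟨z₀, hz₀ne, fun z => ?_⟩
  constructor
  · intro hEq
    rcases eq_or_ne z 0 with rfl | hz
    · exact Or.inl rfl
    right
    -- z^Q * z₀ = z₀^Q * z
    have hkey : z ^ Q * z₀ = z₀ ^ Q * z := by
      have hwj : w ^ (2:ℕ) ^ j ≠ 0 := pow_ne_zero _ hw
      apply mul_left_cancel₀ hwj
      calc w ^ (2:ℕ)^j * (z ^ Q * z₀) = (w ^ (2:ℕ)^j * z ^ Q) * z₀ := by ring
      _ = (w * z) * z₀ := by rw [hEq]
      _ = (w * z₀) * z := by ring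
      _ = (w ^ (2:ℕ)^j * z₀ ^ Q) * z := by rw [hz₀eq]
      _ = w ^ (2:ℕ)^j * (z₀ ^ Q * z) := by ring
    set y : K := z * z₀⁻¹ with hydef
    have hyne : y ≠ 0 := mul_ne_zero hz (inv_ne_zero hz₀ne)
    have hzQ : z ^ Q = z₀ ^ Q * z * z₀⁻¹ := by
      apply mul_right_cancel₀ hz₀ne
      rw [hkey]
      field_simp
    have hyQ : y ^ Q = y := by
      calc y ^ Q = (z₀ ^ Q * (z₀ ^ Q)⁻¹) * (z * z₀⁻¹) := by
            rw [hydef, mul_pow, hzQ, inv_pow]; ring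
      _ = z * z₀⁻¹ := by rw [mul_inv_cancel₀ (pow_ne_zero Q hz₀ne), one_mul]
      _ = y := hydef.symm
    have hyQ1 : y ^ (Q - 1) = 1 := by
      have : y ^ (Q - 1) * y = 1 * y := by
        rw [one_mul, ← pow_succ, show Q - 1 + 1 = Q by omega, hyQ]
      exact mul_right_cancel₀ hyne this
    have hy3 : y ^ 3 = 1 := by
      set yu : Kˣ := Units.mk0 y hyne with hyudef
      have h1 : yu ^ (Q - 1) = 1 := by
        ext
        simpa [hyudef] using hyQ1
      have h2 : orderOf yu ∣ g := Nat.dvd_gcd (orderOf_dvd_of_pow_eq_one h1) orderOf_dvd_card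
      have h3 : yu ^ (3:ℕ) = 1 := orderOf_dvd_iff_pow_eq_one.mp (dvd_trans h2 hg3)
      have := congrArg (Units.val) h3
      simpa [hyudef] using this
    have hprod : (y + 1) * (y + ω) * (y + ω^2) = 0 := by
      rw [factor, hy3]
      linear_combination htwo
    have hzy : ∀ yv : K, y = yv → z = yv * z₀ := by
      intro yv hyv
      rw [← hyv, hydef]
      field_simp
    rcases mul_eq_zero.mp hprod with h12 | h3
    · rcases mul_eq_zero.mp h12 with h1 | h2
      · left
        have : y = 1 := by linear_combination h1 - htwo
        rw [hzy 1 this, one_mul]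
      · right; left
        exact hzy ω (by linear_combination h2 - htwo * ω)
    · right; right
      exact hzy (ω^2) (by linear_combination h3 - htwo * ω^2)
  · intro hz
    rcases hz with rfl | rfl | rfl | rfl
    · rw [zero_pow hQ3, mul_zero, mul_zero]
    · exact hz₀eq
    · have hωQ : ω ^ Q = ω := hcube_pow ω hω3
      rw [mul_pow, hωQ]
      linear_combination ω * hz₀eq
    · have hωQ : (ω^2) ^ Q = ω^2 := hcube_pow (ω^2) (by rw [← pow_mul, show 2*3 = 3*2 by ring, pow_mul, hω3, one_pow])
      rw [mul_pow, hωQ]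
      linear_combination ω^2 * hz₀eq


/-- Lemma 4.4: for `k` odd, `1 ≤ i < k`, `gcd(i,k) = 1` and `(c,d) ≠ (0,0)`, the
linearized system in `(u,v)` has exactly 4 solutions over `GaloisField 2 k × GaloisField 2 k`. -/
theorem trivial_coeff_radical_exactly_four_solutions (k i : ℕ) (hk : Odd k)
    (hipos : 1 ≤ i) (hik : i < k) (hgcd : Nat.gcd i k = 1)
    (c d : GaloisField 2 k) (hcd : (c, d) ≠ (0, 0)) :
    Set.ncard {p : GaloisField 2 k × GaloisField 2 k |
      d * p.1 ^ 2 ^ i + (d * p.1) ^ 2 ^ (k - i)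
          + (c + d) * p.2 ^ 2 ^ i + ((c + d) * p.2) ^ 2 ^ (k - i) = 0 ∧
      (c + d) * p.1 ^ 2 ^ i + ((c + d) * p.1) ^ 2 ^ (k - i)
          + c * p.2 ^ 2 ^ i + (c * p.2) ^ 2 ^ (k - i) = 0} = 4 := by
  classical
  have hk0 : k ≠ 0 := by omega
  haveI : Fintype (GaloisField 2 k) := Fintype.ofFinite (GaloisField 2 k)
  have htwoF : (2 : (GaloisField 2 k)) = 0 := CharTwo.two_eq_zero
  have hcardF : Fintype.card (GaloisField 2 k) = 2 ^ k := by
    rw [← Nat.card_eq_fintype_card]; exact GaloisField.card 2 k hk0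
  have hxk : ∀ x : (GaloisField 2 k), x ^ 2 ^ k = x := by
    intro x; rw [← hcardF]; exact FiniteField.pow_card x
  have hper : ∀ (x : (GaloisField 2 k)) (s : ℕ), x ^ 2 ^ (k * s) = x := by
    intro x s
    induction s with
    | zero => simp
    | succ n ih =>
      rw [Nat.mul_succ, pow_add, pow_mul, ih, hxk]
  -- the polynomial
  set P : (GaloisField 2 k)[X] := X ^ 2 + X + 1 with hPdef
  have hPmonic : P.Monic := by
    rw [hPdef]; monicity!
  have hPnd : P.natDegree = 2 := by rw [hPdef]; compute_degree!
  have hPirr : Irreducible P := by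
    rw [hPmonic.irreducible_iff_roots_eq_zero_of_degree_le_three (by simp [hPnd]) (by simp [hPnd])]
    rw [Multiset.eq_zero_iff_forall_notMem]
    intro a ha
    rw [Polynomial.mem_roots hPmonic.ne_zero, Polynomial.IsRoot, hPdef] at ha
    simp only [eval_add, eval_pow, eval_X, eval_one] at ha
    exact no_root k hk hk0 a ha
  haveI : Fact (Irreducible P) := ⟨hPirr⟩
  -- the quadratic extension
  set K := AdjoinRoot P with hKdef
  set ω : K := AdjoinRoot.root P with hωdef
  set alg : (GaloisField 2 k) →+* K := algebraMap (GaloisField 2 k) K with halgdef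
  have halg_inj : Function.Injective alg := alg.injective
  haveI : CharP K 2 := charP_of_injective_ringHom halg_inj 2
  have htwoK : (2 : K) = 0 := CharTwo.two_eq_zero
  have hω : ω ^ 2 + ω + 1 = 0 := by
    have h := AdjoinRoot.eval₂_root P
    rw [hPdef] at h
    simpa using h
  -- linear independence of 1, ω
  have indep : ∀ a b : (GaloisField 2 k), alg a + alg b * ω = 0 → a = 0 ∧ b = 0 := by
    intro a b h
    by_cases hb : b = 0
    · subst hb
      simp only [map_zero, zero_mul, add_zero] at h
      exact ⟨halg_inj (by simpa using h), rfl⟩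
    · exfalso
      have hbne : alg b ≠ 0 := fun h0 => hb (halg_inj (by simpa using h0))
      have hωeq : ω = alg (a * b⁻¹) := by
        have h1 : alg b * ω = alg a := by
          linear_combination h - alg a * htwoK
        rw [map_mul, map_inv₀]
        rw [eq_mul_inv_iff_mul_eq₀ hbne]
        linear_combination h1
      have : (a * b⁻¹) ^ 2 + (a * b⁻¹) + 1 = 0 := by
        apply halg_inj
        rw [map_add, map_add, map_pow, map_one, map_zero, ← hωeq]
        exact hω
      exact no_root k hk hk0 _ this
  have pairEq : ∀ a b a' b' : (GaloisField 2 k),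
      (alg a + alg b * ω = alg a' + alg b' * ω) ↔ (a = a' ∧ b = b') := by
    intro a b a' b'
    constructor
    · intro h
      have h0 : alg (a - a') + alg (b - b') * ω = 0 := by
        rw [map_sub, map_sub]
        linear_combination h
      obtain ⟨h1, h2⟩ := indep _ _ h0
      exact ⟨sub_eq_zero.mp h1, sub_eq_zero.mp h2⟩
    · rintro ⟨rfl, rfl⟩; rfl
  -- the identification (GaloisField 2 k) × (GaloisField 2 k) ≃ K
  set ι : (GaloisField 2 k) × (GaloisField 2 k) → K := fun Pr => alg Pr.1 + alg Pr.2 * ω with hιdef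
  have hι_inj : Function.Injective ι := by
    rintro ⟨a, b⟩ ⟨a', b'⟩ h
    obtain ⟨h1, h2⟩ := (pairEq a b a' b').mp h
    simp [h1, h2]
  have hι_surj : Function.Surjective ι := by
    intro zK
    obtain ⟨f, rfl⟩ := AdjoinRoot.mk_surjective zK
    have hsplit : AdjoinRoot.mk P f = AdjoinRoot.mk P (f %ₘ P) := by
      conv_lhs => rw [← Polynomial.modByMonic_add_div f P]
      rw [map_add, map_mul, AdjoinRoot.mk_self, zero_mul, add_zero]
    have hdeg : (f %ₘ P).degree ≤ 1 := by
      have h1 : (f %ₘ P).degree < P.degree := Polynomial.degree_modByMonic_lt f hPmonic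
      have h2 : P.degree = 2 := by
        rw [Polynomial.degree_eq_natDegree hPmonic.ne_zero, hPnd]; rfl
      rw [h2] at h1
      exact Order.le_of_lt_succ (by exact_mod_cast h1)
    refine ⟨((f %ₘ P).coeff 0, (f %ₘ P).coeff 1), ?_⟩
    rw [hιdef]
    conv_rhs => rw [hsplit, Polynomial.eq_X_add_C_of_degree_le_one hdeg]
    simp only [map_add, map_mul, AdjoinRoot.mk_X, AdjoinRoot.mk_C]
    rw [halgdef, AdjoinRoot.algebraMap_eq]
    ring
  have hι_bij : Function.Bijective ι := ⟨hι_inj, hι_surj⟩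
  haveI : Fintype K := Fintype.ofBijective ι hι_bij
  have hcardK : Fintype.card K = 2 ^ (2 * k) := by
    rw [← Fintype.card_congr (Equiv.ofBijective ι hι_bij), Fintype.card_prod, hcardF,
      ← pow_add, two_mul]
  -- ω facts
  have hω3 : ω ^ 3 = 1 := by linear_combination (ω - 1) * hω
  have hωne : ω ≠ 0 := by rintro h; rw [h] at hω; simp at hω
  have hωne1 : ω ≠ 1 := by
    rintro h; rw [h] at hω
    exact one_ne_zero (α := K) (by linear_combination hω - htwoK)
  have hω2ne1 : ω ^ 2 ≠ 1 := by
    intro h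
    exact hωne (by linear_combination hω - h - htwoK)
  have hω2neω : ω ^ 2 ≠ ω := by
    intro h
    exact one_ne_zero (α := K) (by linear_combination hω - h - ω * htwoK)
  have hω4s : ∀ s : ℕ, ω ^ 4 ^ s = ω := by
    intro s
    induction s with
    | zero => simp
    | succ n ih =>
      rw [pow_succ, pow_mul, ih]
      linear_combination ω * hω3
  have hωQ : ω ^ 2 ^ (2 * i) = ω := by
    rw [show (2:ℕ) ^ (2*i) = 4 ^ i by rw [pow_mul]; norm_num]
    exact hω4s i
  obtain ⟨m, hm⟩ : ∃ m, k + 1 = 2 * m := ⟨(k+1)/2, by obtain ⟨t, rfl⟩ := hk; omega⟩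
  have hωj : ω ^ 2 ^ (i * (k + 1)) = ω := by
    rw [show i * (k+1) = 2 * (i * m) by rw [hm]; ring,
      show (2:ℕ) ^ (2*(i*m)) = 4 ^ (i*m) by rw [pow_mul]; norm_num]
    exact hω4s (i*m)
  -- reduction of Frobenius exponents on (GaloisField 2 k)
  have hred : ∀ x : (GaloisField 2 k), x ^ 2 ^ (i * (k+1)) = x ^ 2 ^ i := by
    intro x
    rw [show i * (k+1) = k * i + i by ring, pow_add, pow_mul, hper]
  -- the multiplication rule
  have hmulK : ∀ a b x y : (GaloisField 2 k), (alg a + alg b * ω) * (alg x + alg y * ω) =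
      alg (a*x + b*y) + alg (a*y + b*x + b*y) * ω := by
    intro a b x y
    simp only [map_add, map_mul]
    linear_combination (alg b * alg y) * hω - (alg b * alg y * (ω + 1)) * htwoK
  -- the element w
  set e : (GaloisField 2 k) := c + d with hedef
  set w : K := alg d + alg e * ω with hwdef
  have hwne : w ≠ 0 := by
    intro h
    obtain ⟨hd0, he0⟩ := indep d e h
    have hc0 : c = 0 := by
      have : e = c + d := hedef
      rw [hd0, add_zero] at this
      rw [← this, he0]
    exact hcd (by rw [hc0, hd0])
  have hwq : w ^ 2 ^ (i * (k+1)) = alg (d ^ 2 ^ i) + alg (e ^ 2 ^ i) * ω := by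
    rw [hwdef, add_pow_char_pow, mul_pow, ← map_pow, ← map_pow, hωj, hred, hred]
  have hzQexp : ∀ u v : (GaloisField 2 k), (alg u + alg v * ω) ^ 2 ^ (2*i) =
      alg (u ^ 2 ^ (2*i)) + alg (v ^ 2 ^ (2*i)) * ω := by
    intro u v
    rw [add_pow_char_pow, mul_pow, ← map_pow, ← map_pow, hωQ]
  -- Frobenius injectivity on (GaloisField 2 k)
  have hfro : ∀ a b : (GaloisField 2 k), a ^ 2 ^ i = b ^ 2 ^ i → a = b := by
    intro a b h
    apply (iterateFrobenius (GaloisField 2 k) 2 i).injective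
    show iterateFrobenius (GaloisField 2 k) 2 i a = iterateFrobenius (GaloisField 2 k) 2 i b
    simp only [iterateFrobenius_def]
    exact h
  have hiff : ∀ A B : (GaloisField 2 k), A = B ↔ A ^ 2 ^ i = B ^ 2 ^ i :=
    fun A B => ⟨fun h => by rw [h], hfro A B⟩
  have hch : ∀ a b c' d' : (GaloisField 2 k), (a + b + c' + d' = 0) ↔ (a + c' = b + d') := by
    intro a b c' d'
    constructor
    · intro h; linear_combination h - (b + d') * htwoF
    · intro h; linear_combination h + (b + d') * htwoF
  have powA : ∀ x a : (GaloisField 2 k), (a * x ^ 2 ^ i) ^ 2 ^ i = a ^ 2 ^ i * x ^ 2 ^ (2*i) := by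
    intro x a
    rw [mul_pow, ← pow_mul, ← pow_add, two_mul]
  have powB : ∀ y : (GaloisField 2 k), (y ^ 2 ^ (k-i)) ^ 2 ^ i = y := by
    intro y
    rw [← pow_mul, ← pow_add, Nat.sub_add_cancel hik.le, hxk]
  -- the main pointwise equivalence
  have key : ∀ u v : (GaloisField 2 k),
      ((d * u ^ 2^i + (d*u) ^ 2^(k-i) + e * v ^ 2^i + (e*v) ^ 2^(k-i) = 0 ∧
        e * u ^ 2^i + (e*u) ^ 2^(k-i) + c * v ^ 2^i + (c*v) ^ 2^(k-i) = 0) ↔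
       (w ^ 2 ^ (i*(k+1)) * (alg u + alg v * ω) ^ 2 ^ (2*i) = w * (alg u + alg v * ω))) := by
    intro u v
    have hE1 : (d * u ^ 2^i + (d*u) ^ 2^(k-i) + e * v ^ 2^i + (e*v) ^ 2^(k-i) = 0) ↔
        (d ^ 2^i * u ^ 2^(2*i) + e ^ 2^i * v ^ 2^(2*i) = d*u + e*v) := by
      rw [hch, hiff (d * u ^ 2^i + e * v ^ 2^i) ((d*u) ^ 2^(k-i) + (e*v) ^ 2^(k-i)),
        add_pow_char_pow, add_pow_char_pow, powA, powA, powB, powB]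
    have hE2 : (e * u ^ 2^i + (e*u) ^ 2^(k-i) + c * v ^ 2^i + (c*v) ^ 2^(k-i) = 0) ↔
        (e ^ 2^i * u ^ 2^(2*i) + c ^ 2^i * v ^ 2^(2*i) = e*u + c*v) := by
      rw [hch, hiff (e * u ^ 2^i + c * v ^ 2^i) ((e*u) ^ 2^(k-i) + (c*v) ^ 2^(k-i)),
        add_pow_char_pow, add_pow_char_pow, powA, powA, powB, powB]
    have hce : c = d + e := by rw [hedef]; linear_combination - d * htwoF
    have hceq : c ^ 2 ^ i = d ^ 2 ^ i + e ^ 2 ^ i := by rw [hce]; exact add_pow_char_pow ..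
    have hKiff : (w ^ 2 ^ (i*(k+1)) * (alg u + alg v * ω) ^ 2 ^ (2*i) = w * (alg u + alg v * ω)) ↔
        ((d ^ 2^i * u ^ 2^(2*i) + e ^ 2^i * v ^ 2^(2*i) = d*u + e*v) ∧
         (d ^ 2^i * v ^ 2^(2*i) + e ^ 2^i * u ^ 2^(2*i) + e ^ 2^i * v ^ 2^(2*i)
            = d*v + e*u + e*v)) := by
      rw [hwq, hzQexp, hmulK, hwdef, hmulK]
      exact pairEq _ _ _ _
    have hsecond : (d ^ 2^i * v ^ 2^(2*i) + e ^ 2^i * u ^ 2^(2*i) + e ^ 2^i * v ^ 2^(2*i)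
          = d*v + e*u + e*v) ↔
        (e ^ 2^i * u ^ 2^(2*i) + c ^ 2^i * v ^ 2^(2*i) = e*u + c*v) := by
      rw [hceq, hce]
      constructor <;> intro h <;> linear_combination h
    rw [hE1, hE2, hKiff, hsecond]
  -- apply the counting lemma
  obtain ⟨z₀, hz₀ne, hiffK⟩ := count_lemma k i hk hipos hik hgcd hcardK ω hω w hwne
  have hset : {p : (GaloisField 2 k) × (GaloisField 2 k) |
      d * p.1 ^ 2 ^ i + (d * p.1) ^ 2 ^ (k - i) + e * p.2 ^ 2 ^ i + (e * p.2) ^ 2 ^ (k - i) = 0 ∧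
      e * p.1 ^ 2 ^ i + (e * p.1) ^ 2 ^ (k - i) + c * p.2 ^ 2 ^ i + (c * p.2) ^ 2 ^ (k - i) = 0}
      = ι ⁻¹' ({0, z₀, ω * z₀, ω ^ 2 * z₀} : Set K) := by
    ext ⟨u, v⟩
    simp only [Set.mem_setOf_eq, Set.mem_preimage, Set.mem_insert_iff, Set.mem_singleton_iff]
    rw [key u v, hiffK (ι (u, v))]
  rw [hset, ← Set.ncard_image_of_injective _ hι_inj, Set.image_preimage_eq _ hι_surj]
  have d1 : (0:K) ∉ ({z₀, ω * z₀, ω ^ 2 * z₀} : Set K) := by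
    simp only [Set.mem_insert_iff, Set.mem_singleton_iff]
    push_neg
    exact ⟨fun h => hz₀ne h.symm, fun h => mul_ne_zero hωne hz₀ne h.symm,
      fun h => mul_ne_zero (pow_ne_zero 2 hωne) hz₀ne h.symm⟩
  have d2 : z₀ ∉ ({ω * z₀, ω ^ 2 * z₀} : Set K) := by
    simp only [Set.mem_insert_iff, Set.mem_singleton_iff]
    push_neg
    constructor
    · intro h
      exact hωne1 (mul_right_cancel₀ hz₀ne (by rw [← h, one_mul])).symm
    · intro h
      exact hω2ne1 (mul_right_cancel₀ hz₀ne (by rw [← h, one_mul])).symm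
  have d3 : ω * z₀ ≠ ω ^ 2 * z₀ := by
    intro h
    exact hω2neω (mul_right_cancel₀ hz₀ne h).symm
  rw [Set.ncard_insert_of_notMem d1 (Set.toFinite _),
    Set.ncard_insert_of_notMem d2 (Set.toFinite _), Set.ncard_pair d3]
end
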